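/- Let G be a planar PCC graph and let σ, σ', κ be faces of G with |σ| ≥ 20, |σ'| ≥ 20 and |κ| ≤ 6. Let e and e' be boundary edges of κ such that e is a boundary edge of σ and e' is a boundary edge of σ'. Then σ = σ' and e = e'. -/

import Mathlib

/-!
We formalize finite graphs 2-cell embedded in the sphere via combinatorial maps
(rotation systems): a finite set of darts together with a vertex-rotation
permutation `σ` and a fixed-point-free edge involution `α`.  Vertices, edges
and faces are the orbits of `σ`, `α` and of the face permutation `φ = σ ∘ α`
respectively; Euler's formula `#V - #E + #F = 2` says that the underlying
closed orientable surface is the sphere.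
-/

/-- A finite combinatorial map (rotation system), encoding a finite graph
2-cell embedded in a closed orientable surface. -/
structure PlaneGraph where
  /-- the type of darts (oriented edges) -/
  D : Type
  fintypeD : Fintype D
  /-- the counterclockwise rotation of the darts around their base vertex -/
  σ : Equiv.Perm D
  /-- the involution sending a dart to the opposite dart of the same edge -/
  α : Equiv.Perm D
  α_invol : ∀ d, α (α d) = d
  α_fixfree : ∀ d, α d ≠ d

namespace PlaneGraph

variable (G : PlaneGraph)

instance : Fintype G.D := G.fintypeD

/-- The face permutation. -/
def φ : Equiv.Perm G.D := G.σ * G.α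

/-- Darts based at the same vertex, i.e. in the same `σ`-orbit. -/
def vSetoid : Setoid G.D :=
  ⟨G.σ.SameCycle, ⟨fun _ => Equiv.Perm.SameCycle.refl _ _,
    fun h => h.symm, fun h h' => h.trans h'⟩⟩

/-- Darts of the same edge, i.e. in the same `α`-orbit. -/
def eSetoid : Setoid G.D :=
  ⟨G.α.SameCycle, ⟨fun _ => Equiv.Perm.SameCycle.refl _ _,
    fun h => h.symm, fun h h' => h.trans h'⟩⟩

/-- Darts of the same face, i.e. in the same `φ`-orbit. -/
def fSetoid : Setoid G.D :=
  ⟨G.φ.SameCycle, ⟨fun _ => Equiv.Perm.SameCycle.refl _ _,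
    fun h => h.symm, fun h h' => h.trans h'⟩⟩

/-- The vertices of the graph. -/
def Vertex := Quotient G.vSetoid

/-- The edges of the graph. -/
def Edge := Quotient G.eSetoid

/-- The faces of the embedded graph. -/
def Face := Quotient G.fSetoid

noncomputable instance : Fintype G.Vertex :=
  @Quotient.fintype _ _ G.vSetoid (Classical.decRel _)

noncomputable instance : Fintype G.Edge :=
  @Quotient.fintype _ _ G.eSetoid (Classical.decRel _)

noncomputable instance : Fintype G.Face :=
  @Quotient.fintype _ _ G.fSetoid (Classical.decRel _)

/-- The base vertex of a dart. -/
def vertexOf (d : G.D) : G.Vertex := Quotient.mk G.vSetoid d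

/-- The edge underlying a dart. -/
def edgeOf (d : G.D) : G.Edge := Quotient.mk G.eSetoid d

/-- The face on the left of a dart. -/
def faceOf (d : G.D) : G.Face := Quotient.mk G.fSetoid d

open scoped Classical in
/-- The darts based at a given vertex. -/
noncomputable def dartsAt (v : G.Vertex) : Finset G.D :=
  Finset.univ.filter fun d => G.vertexOf d = v

open scoped Classical in
/-- The darts of a given face. -/
noncomputable def dartsOfFace (f : G.Face) : Finset G.D :=
  Finset.univ.filter fun d => G.faceOf d = f

open scoped Classical in
/-- The darts of a given edge. -/
noncomputable def dartsOfEdge (e : G.Edge) : Finset G.D :=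
  Finset.univ.filter fun d => G.edgeOf d = e

/-- The degree of a vertex. -/
noncomputable def degree (v : G.Vertex) : ℕ := (G.dartsAt v).card

/-- The size of a face: the number of its boundary edges, counted with
multiplicity. -/
noncomputable def faceSize (f : G.Face) : ℕ := (G.dartsOfFace f).card

/-- The multiset of faces incident to a vertex (with multiplicity). -/
noncomputable def facesAt (v : G.Vertex) : Multiset G.Face :=
  (G.dartsAt v).val.map G.faceOf

/-- The face vector of a vertex: the multiset of the sizes of the faces
incident to it (with multiplicity). -/
noncomputable def faceVector (v : G.Vertex) : Multiset ℕ :=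
  (G.dartsAt v).val.map fun d => G.faceSize (G.faceOf d)

/-- The multiset of the boundary vertices of a face (with multiplicity). -/
noncomputable def boundaryVertices (f : G.Face) : Multiset G.Vertex :=
  (G.dartsOfFace f).val.map G.vertexOf

/-- The multiset of the boundary edges of a face (with multiplicity). -/
noncomputable def boundaryEdges (f : G.Face) : Multiset G.Edge :=
  (G.dartsOfFace f).val.map G.edgeOf

/-- The side vector of an edge: the multiset of the sizes of the two faces
lying on either side of it. -/
noncomputable def sideVector (e : G.Edge) : Multiset ℕ :=
  (G.dartsOfEdge e).val.map fun d => G.faceSize (G.faceOf d)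

/-- The combinatorial curvature of a vertex:
`K(v) = 1 - deg(v)/2 + ∑_{σ ∈ F(v)} 1/|σ|`. -/
noncomputable def curvature (v : G.Vertex) : ℚ :=
  1 - (G.degree v : ℚ) / 2 + ∑ d ∈ G.dartsAt v, (1 : ℚ) / (G.faceSize (G.faceOf d))

/-- The graph is connected. -/
def Connected : Prop :=
  ∀ d d' : G.D, Relation.ReflTransGen (fun a b => G.σ a = b ∨ G.α a = b) d d'

/-- The graph has no loops. -/
def Loopless : Prop := ∀ d : G.D, G.vertexOf (G.α d) ≠ G.vertexOf d

/-- The graph has no multiple edges: an edge is determined by its two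
endpoints. -/
def NoMultiEdges : Prop :=
  ∀ d d' : G.D, G.vertexOf d = G.vertexOf d' →
    G.vertexOf (G.α d) = G.vertexOf (G.α d') → G.edgeOf d = G.edgeOf d'

/-- Euler's formula `#V - #E + #F = 2`: the graph is 2-cell embedded in the
sphere. -/
def IsSphere : Prop :=
  (Fintype.card G.Vertex : ℤ) - (Fintype.card G.Edge : ℤ) +
    (Fintype.card G.Face : ℤ) = 2

/-- The multiset of the sizes of all faces of the graph. -/
noncomputable def allFaceSizes : Multiset ℕ :=
  (Finset.univ : Finset G.Face).val.map G.faceSize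

/-- `G` is a prism of some order `N`: it has `2N` vertices, two faces of size
`N` and `N` faces of size 4, and every vertex is incident to faces of sizes
`4, 4, N`. -/
def IsPrism : Prop :=
  ∃ N : ℕ, Fintype.card G.Vertex = 2 * N ∧
    (∀ v : G.Vertex, G.faceVector v = {4, 4, N}) ∧
    G.allFaceSizes = Multiset.replicate N 4 + {N, N}

/-- `G` is an antiprism of some order `N`: it has `2N` vertices, two faces of
size `N` and `2N` faces of size 3, and every vertex is incident to faces of
sizes `3, 3, 3, N`. -/
def IsAntiprism : Prop :=
  ∃ N : ℕ, Fintype.card G.Vertex = 2 * N ∧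
    (∀ v : G.Vertex, G.faceVector v = {3, 3, 3, N}) ∧
    G.allFaceSizes = Multiset.replicate (2 * N) 3 + {N, N}

/-- A planar PCC graph: a finite simple connected planar graph, 2-cell
embedded in the sphere, which is not a prism or an antiprism, all of whose
vertices have degree at least 3 and strictly positive combinatorial
curvature. -/
def IsPCC : Prop :=
  G.Connected ∧ G.Loopless ∧ G.NoMultiEdges ∧ G.IsSphere ∧
    (∀ v : G.Vertex, 3 ≤ G.degree v) ∧
    (∀ v : G.Vertex, 0 < G.curvature v) ∧
    ¬G.IsPrism ∧ ¬G.IsAntiprism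

end PlaneGraph


/-! ### Auxiliary infrastructure -/

namespace PlaneGraph

open Finset

variable {G : PlaneGraph}

set_option linter.unusedSectionVars false

section PermOrbit

variable {D : Type} [Fintype D]

open scoped Classical

/-- The orbit of `x` under a permutation, as a finset. -/
noncomputable def permOrbit (π : Equiv.Perm D) (x : D) : Finset D :=
  Finset.univ.filter (π.SameCycle x)

lemma mem_permOrbit {π : Equiv.Perm D} {x y : D} :
    y ∈ permOrbit π x ↔ π.SameCycle x y := by
  rw [permOrbit, Finset.mem_filter]
  exact ⟨fun h => h.2, fun h => ⟨Finset.mem_univ _, h⟩⟩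

lemma pow_mul_fix (π : Equiv.Perm D) (x : D) (m : ℕ) (h : (π ^ m) x = x) (q : ℕ) :
    (π ^ (m * q)) x = x := by
  induction q with
  | zero => simp
  | succ n ih => rw [Nat.mul_succ, pow_add, Equiv.Perm.mul_apply, h]; exact ih

lemma pow_mod_fix (π : Equiv.Perm D) (x : D) (m : ℕ) (h : (π ^ m) x = x) (i : ℕ) :
    (π ^ (i % m)) x = (π ^ i) x := by
  conv_rhs => rw [← Nat.mod_add_div i m]
  rw [pow_add, Equiv.Perm.mul_apply, pow_mul_fix π x m h _]

lemma permOrbit_subset_image (π : Equiv.Perm D) (x : D) (m : ℕ) (hm : 0 < m)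
    (h : (π ^ m) x = x) :
    permOrbit π x ⊆ (Finset.range m).image (fun i => (π ^ i) x) := by
  intro y hy
  obtain ⟨i, -, hi⟩ := (mem_permOrbit.1 hy).exists_pow_eq'
  refine Finset.mem_image.2 ⟨i % m, Finset.mem_range.2 (Nat.mod_lt _ hm), ?_⟩
  rw [pow_mod_fix π x m h i, hi]

lemma permOrbit_card_le (π : Equiv.Perm D) (x : D) (m : ℕ) (hm : 0 < m)
    (h : (π ^ m) x = x) : (permOrbit π x).card ≤ m :=
  le_trans (Finset.card_le_card (permOrbit_subset_image π x m hm h))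
    (le_trans Finset.card_image_le (by simp))

lemma self_mem_permOrbit (π : Equiv.Perm D) (x : D) : x ∈ permOrbit π x :=
  mem_permOrbit.2 (Equiv.Perm.SameCycle.refl _ _)

lemma permOrbit_card_pos (π : Equiv.Perm D) (x : D) : 0 < (permOrbit π x).card :=
  Finset.card_pos.2 ⟨x, self_mem_permOrbit π x⟩

lemma pow_permOrbit_card_fix (π : Equiv.Perm D) (x : D) :
    (π ^ (permOrbit π x).card) x = x := by
  by_cases hx : π x = x
  · have h1 : ∀ i : ℕ, (π ^ i) x = x := by
      intro i
      induction i with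
      | zero => rfl
      | succ n ih => rw [pow_succ, Equiv.Perm.mul_apply, hx, ih]
    exact h1 _
  · have hsupp : x ∈ π.support := Equiv.Perm.mem_support.2 hx
    have hcyc : (π.cycleOf x).IsCycle := Equiv.Perm.isCycle_cycleOf π hx
    have hset : (π.cycleOf x).support = permOrbit π x := by
      ext y
      rw [Equiv.Perm.mem_support_cycleOf_iff, mem_permOrbit]
      exact ⟨fun h => h.1, fun h => ⟨h, hsupp⟩⟩
    have horder : orderOf (π.cycleOf x) = (permOrbit π x).card := by
      rw [hcyc.orderOf, hset]
    have h2 : ((π.cycleOf x) ^ (permOrbit π x).card) x = x := by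
      rw [← horder, pow_orderOf_eq_one (π.cycleOf x)]; rfl
    rwa [Equiv.Perm.cycleOf_pow_apply_self] at h2

lemma pow_sub_fix (π : Equiv.Perm D) (x : D) {i j : ℕ} (hle : i ≤ j)
    (h : (π ^ i) x = (π ^ j) x) : (π ^ (j - i)) x = x := by
  apply Equiv.injective (π ^ i)
  rw [← Equiv.Perm.mul_apply, ← pow_add]
  have hij : i + (j - i) = j := by omega
  rw [hij, ← h]

lemma pow_inj_on_permOrbit (π : Equiv.Perm D) (x : D) {i j : ℕ}
    (hi : i < (permOrbit π x).card) (hj : j < (permOrbit π x).card)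
    (h : (π ^ i) x = (π ^ j) x) : i = j := by
  rcases le_total i j with hle | hle
  · by_contra hne
    have := permOrbit_card_le π x (j - i) (by omega) (pow_sub_fix π x hle h)
    omega
  · by_contra hne
    have := permOrbit_card_le π x (i - j) (by omega) (pow_sub_fix π x hle h.symm)
    omega

lemma sameCycle_exists_pow_lt (π : Equiv.Perm D) {x y : D} (h : π.SameCycle x y) :
    ∃ i < (permOrbit π x).card, (π ^ i) x = y := by
  obtain ⟨i, -, hi⟩ := h.exists_pow_eq'
  exact ⟨i % (permOrbit π x).card,
    Nat.mod_lt _ (permOrbit_card_pos π x),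
    by rw [pow_mod_fix π x _ (pow_permOrbit_card_fix π x) i, hi]⟩

end PermOrbit

section Basic

variable {G : PlaneGraph}

lemma alpha_alpha (d : G.D) : G.α (G.α d) = d := G.α_invol d

lemma phi_apply (d : G.D) : G.φ d = G.σ (G.α d) := rfl

lemma vertexOf_eq_iff {d d' : G.D} :
    G.vertexOf d = G.vertexOf d' ↔ G.σ.SameCycle d d' :=
  ⟨fun h => Quotient.exact h, fun h => Quotient.sound h⟩

lemma faceOf_eq_iff {d d' : G.D} :
    G.faceOf d = G.faceOf d' ↔ G.φ.SameCycle d d' :=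
  ⟨fun h => Quotient.exact h, fun h => Quotient.sound h⟩

lemma edgeOf_eq_iff {d d' : G.D} :
    G.edgeOf d = G.edgeOf d' ↔ G.α.SameCycle d d' :=
  ⟨fun h => Quotient.exact h, fun h => Quotient.sound h⟩

open scoped Classical in
lemma mem_dartsAt {v : G.Vertex} {d : G.D} : d ∈ G.dartsAt v ↔ G.vertexOf d = v := by
  rw [dartsAt, Finset.mem_filter]
  exact ⟨fun h => h.2, fun h => ⟨Finset.mem_univ _, h⟩⟩

open scoped Classical in
lemma mem_dartsOfFace {f : G.Face} {d : G.D} :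
    d ∈ G.dartsOfFace f ↔ G.faceOf d = f := by
  rw [dartsOfFace, Finset.mem_filter]
  exact ⟨fun h => h.2, fun h => ⟨Finset.mem_univ _, h⟩⟩

open scoped Classical in
lemma mem_dartsOfEdge {e : G.Edge} {d : G.D} :
    d ∈ G.dartsOfEdge e ↔ G.edgeOf d = e := by
  rw [dartsOfEdge, Finset.mem_filter]
  exact ⟨fun h => h.2, fun h => ⟨Finset.mem_univ _, h⟩⟩

lemma dartsAt_eq_permOrbit (d : G.D) : G.dartsAt (G.vertexOf d) = permOrbit G.σ d := by
  ext y
  rw [mem_dartsAt, mem_permOrbit, ← vertexOf_eq_iff, eq_comm]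

lemma dartsOfFace_eq_permOrbit (d : G.D) :
    G.dartsOfFace (G.faceOf d) = permOrbit G.φ d := by
  ext y
  rw [mem_dartsOfFace, mem_permOrbit, ← faceOf_eq_iff, eq_comm]

lemma degree_vertexOf (d : G.D) : G.degree (G.vertexOf d) = (permOrbit G.σ d).card := by
  rw [degree, dartsAt_eq_permOrbit]

lemma faceSize_faceOf (d : G.D) : G.faceSize (G.faceOf d) = (permOrbit G.φ d).card := by
  rw [faceSize, dartsOfFace_eq_permOrbit]

lemma pow_degree_fix (d : G.D) : (G.σ ^ G.degree (G.vertexOf d)) d = d := by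
  rw [degree_vertexOf]; exact pow_permOrbit_card_fix G.σ d

lemma pow_faceSize_fix (d : G.D) : (G.φ ^ G.faceSize (G.faceOf d)) d = d := by
  rw [faceSize_faceOf]; exact pow_permOrbit_card_fix G.φ d

lemma degree_le_of_pow_fix (d : G.D) {m : ℕ} (hm : 0 < m) (h : (G.σ ^ m) d = d) :
    G.degree (G.vertexOf d) ≤ m := by
  rw [degree_vertexOf]; exact permOrbit_card_le G.σ d m hm h

lemma faceSize_le_of_pow_fix (d : G.D) {m : ℕ} (hm : 0 < m) (h : (G.φ ^ m) d = d) :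
    G.faceSize (G.faceOf d) ≤ m := by
  rw [faceSize_faceOf]; exact permOrbit_card_le G.φ d m hm h

lemma vertexOf_sigma (d : G.D) : G.vertexOf (G.σ d) = G.vertexOf d :=
  (vertexOf_eq_iff.2 ⟨1, by simp⟩).symm

lemma faceOf_phi (d : G.D) : G.faceOf (G.φ d) = G.faceOf d :=
  (faceOf_eq_iff.2 ⟨1, by simp⟩).symm

lemma edgeOf_alpha (d : G.D) : G.edgeOf (G.α d) = G.edgeOf d :=
  (edgeOf_eq_iff.2 ⟨1, by simp⟩).symm

lemma vertexOf_phi (d : G.D) : G.vertexOf (G.φ d) = G.vertexOf (G.α d) := by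
  rw [phi_apply]; exact vertexOf_sigma _

lemma faceOf_alpha (d : G.D) : G.faceOf (G.α d) = G.faceOf (G.σ d) := by
  have h : G.σ d = G.φ (G.α d) := by rw [phi_apply, alpha_alpha]
  rw [h, faceOf_phi]

lemma alpha_eq_inv_phi (d : G.D) : G.α d = G.σ⁻¹ (G.φ d) := by
  rw [phi_apply]; simp

lemma alpha_pow_cases (d : G.D) (i : ℕ) : (G.α ^ i) d = d ∨ (G.α ^ i) d = G.α d := by
  induction i with
  | zero => left; rfl
  | succ n ih =>
    rcases ih with h | h
    · right; rw [pow_succ', Equiv.Perm.mul_apply, h]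
    · left; rw [pow_succ', Equiv.Perm.mul_apply, h, alpha_alpha]

lemma edgeOf_eq_iff' {d d' : G.D} :
    G.edgeOf d = G.edgeOf d' ↔ d' = d ∨ d' = G.α d := by
  rw [edgeOf_eq_iff]
  constructor
  · intro h
    obtain ⟨i, -, hi⟩ := h.exists_pow_eq'
    rcases alpha_pow_cases d i with h1 | h1
    · left; rw [← hi, h1]
    · right; rw [← hi, h1]
  · rintro (rfl | rfl)
    · exact Equiv.Perm.SameCycle.refl _ _
    · exact ⟨1, by simp⟩

end Basic

section PCC

variable {G : PlaneGraph}

lemma IsPCC.loopless (hG : G.IsPCC) : G.Loopless := hG.2.1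
lemma IsPCC.noMulti (hG : G.IsPCC) : G.NoMultiEdges := hG.2.2.1
lemma IsPCC.deg3 (hG : G.IsPCC) (v : G.Vertex) : 3 ≤ G.degree v := hG.2.2.2.2.1 v
lemma IsPCC.curvPos (hG : G.IsPCC) (v : G.Vertex) : 0 < G.curvature v := hG.2.2.2.2.2.1 v

lemma sigma_ne (hG : G.IsPCC) (d : G.D) : G.σ d ≠ d := by
  intro h
  have h1 : (G.σ ^ 1) d = d := by simpa using h
  have := degree_le_of_pow_fix d one_pos h1
  have := hG.deg3 (G.vertexOf d)
  omega

lemma sigma_sigma_ne (hG : G.IsPCC) (d : G.D) : G.σ (G.σ d) ≠ d := by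
  intro h
  have h1 : (G.σ ^ 2) d = d := by
    rw [pow_two, Equiv.Perm.mul_apply]; exact h
  have := degree_le_of_pow_fix d two_pos h1
  have := hG.deg3 (G.vertexOf d)
  omega

lemma phi_ne (hG : G.IsPCC) (d : G.D) : G.φ d ≠ d := by
  intro h
  have h1 : G.vertexOf (G.α d) = G.vertexOf d := by
    rw [← vertexOf_phi, h]
  exact hG.loopless d h1

lemma phi_phi_ne (hG : G.IsPCC) (d : G.D) : G.φ (G.φ d) ≠ d := by
  intro h
  have h1 : G.vertexOf d = G.vertexOf (G.α (G.φ d)) := by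
    rw [← vertexOf_phi (G.φ d), h]
  have h2 : G.vertexOf (G.α d) = G.vertexOf (G.α (G.α (G.φ d))) := by
    rw [alpha_alpha, ← vertexOf_phi]
  have h3 := hG.noMulti d (G.α (G.φ d)) h1 h2
  rw [edgeOf_alpha] at h3
  rcases edgeOf_eq_iff'.1 h3 with h4 | h4
  · exact phi_ne hG d h4
  · exact sigma_ne hG (G.α d) (by rw [← phi_apply, h4])

lemma three_le_faceSize (hG : G.IsPCC) (d : G.D) : 3 ≤ G.faceSize (G.faceOf d) := by
  have hpos : 0 < G.faceSize (G.faceOf d) := by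
    rw [faceSize_faceOf]; exact permOrbit_card_pos _ _
  have hfix := pow_faceSize_fix d
  by_contra hlt
  interval_cases h : G.faceSize (G.faceOf d)
  · simp only [pow_one] at hfix
    exact phi_ne hG d hfix
  · rw [pow_two, Equiv.Perm.mul_apply] at hfix
    exact phi_phi_ne hG d hfix

lemma faceSize_pos (d : G.D) : 0 < G.faceSize (G.faceOf d) := by
  rw [faceSize_faceOf]; exact permOrbit_card_pos _ _

end PCC

section Curvature

variable {G : PlaneGraph}

/-- `1/|face of d|` as a rational number. -/
noncomputable def finv (G : PlaneGraph) (d : G.D) : ℚ :=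
  1 / (G.faceSize (G.faceOf d))

lemma finv_pos (d : G.D) : 0 < G.finv d := by
  have := faceSize_pos d
  unfold finv
  positivity

lemma finv_le_of_ge {d : G.D} {m : ℕ} (hm : 0 < m) (h : m ≤ G.faceSize (G.faceOf d)) :
    G.finv d ≤ 1 / (m : ℚ) := by
  unfold finv
  apply one_div_le_one_div_of_le
  · exact_mod_cast hm
  · exact_mod_cast h

lemma finv_ge_of_le {d : G.D} {m : ℕ} (h : G.faceSize (G.faceOf d) ≤ m) :
    1 / (m : ℚ) ≤ G.finv d := by
  unfold finv
  apply one_div_le_one_div_of_le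
  · exact_mod_cast faceSize_pos d
  · exact_mod_cast h

lemma finv_le_third (hG : G.IsPCC) (d : G.D) : G.finv d ≤ 1 / 3 := by
  have := finv_le_of_ge (by norm_num) (three_le_faceSize hG d)
  simpa using this

lemma faceSize_lt_of_finv_gt {d : G.D} {m : ℕ} (hm : 0 < m)
    (h : 1 / (m : ℚ) < G.finv d) : G.faceSize (G.faceOf d) < m := by
  unfold finv at h
  rw [div_lt_div_iff₀ (by exact_mod_cast hm : (0:ℚ) < m)
    (by exact_mod_cast faceSize_pos d : (0:ℚ) < (G.faceSize (G.faceOf d) : ℚ))] at h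
  simp only [one_mul] at h
  exact_mod_cast h

lemma curvature_def (v : G.Vertex) :
    G.curvature v = 1 - (G.degree v : ℚ) / 2 + ∑ d ∈ G.dartsAt v, G.finv d := rfl

lemma card_dartsAt (v : G.Vertex) : (G.dartsAt v).card = G.degree v := rfl

open scoped Classical in
lemma sum_finv_le (hG : G.IsPCC) (v : G.Vertex) (B : Finset G.D) (hB : B ⊆ G.dartsAt v) :
    ∑ d ∈ G.dartsAt v, G.finv d ≤
      ∑ d ∈ B, G.finv d + ((G.degree v : ℚ) - B.card) / 3 := by
  have hsd := Finset.sum_sdiff (f := G.finv) hB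
  have hle : ∑ d ∈ G.dartsAt v \ B, G.finv d ≤ ((G.dartsAt v \ B).card : ℚ) * (1/3) := by
    have := Finset.sum_le_card_nsmul (G.dartsAt v \ B) G.finv (1/3)
      (fun x _ => finv_le_third hG x)
    simpa [nsmul_eq_mul] using this
  have hcard : ((G.dartsAt v \ B).card : ℚ) = (G.degree v : ℚ) - B.card := by
    rw [Finset.card_sdiff_of_subset hB, card_dartsAt]
    have := Finset.card_le_card hB
    rw [card_dartsAt] at this
    push_cast [Nat.cast_sub this]
    ring
  rw [hcard] at hle
  linarith

lemma curv_ineq₂ (hG : G.IsPCC) {d1 d2 : G.D} (hv : G.vertexOf d1 = G.vertexOf d2)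
    (hne : d1 ≠ d2) :
    0 < 1 - (G.degree (G.vertexOf d1) : ℚ) / 2 +
      (G.finv d1 + G.finv d2 + ((G.degree (G.vertexOf d1) : ℚ) - 2) / 3) := by
  classical
  set v := G.vertexOf d1 with hv1
  have hB : ({d1, d2} : Finset G.D) ⊆ G.dartsAt v := by
    intro x hx
    rcases Finset.mem_insert.1 hx with rfl | hx
    · exact mem_dartsAt.2 rfl
    · rw [Finset.mem_singleton] at hx
      subst hx
      exact mem_dartsAt.2 hv.symm
  have hcard : ({d1, d2} : Finset G.D).card = 2 := Finset.card_pair hne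
  have hsum : ∑ d ∈ ({d1, d2} : Finset G.D), G.finv d = G.finv d1 + G.finv d2 := by
    rw [Finset.sum_pair hne]
  have h1 := sum_finv_le hG v _ hB
  rw [hcard, hsum] at h1
  have h2 := hG.curvPos v
  rw [curvature_def] at h2
  linarith

lemma curv_ineq₃ (hG : G.IsPCC) {d1 d2 d3 : G.D}
    (hv2 : G.vertexOf d1 = G.vertexOf d2) (hv3 : G.vertexOf d1 = G.vertexOf d3)
    (h12 : d1 ≠ d2) (h13 : d1 ≠ d3) (h23 : d2 ≠ d3) :
    0 < 1 - (G.degree (G.vertexOf d1) : ℚ) / 2 +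
      (G.finv d1 + G.finv d2 + G.finv d3 + ((G.degree (G.vertexOf d1) : ℚ) - 3) / 3) := by
  classical
  set v := G.vertexOf d1 with hv1
  have hB : ({d1, d2, d3} : Finset G.D) ⊆ G.dartsAt v := by
    intro x hx
    simp only [Finset.mem_insert, Finset.mem_singleton] at hx
    rcases hx with rfl | rfl | rfl
    · exact mem_dartsAt.2 rfl
    · exact mem_dartsAt.2 hv2.symm
    · exact mem_dartsAt.2 hv3.symm
  have hcard : ({d1, d2, d3} : Finset G.D).card = 3 := by
    rw [Finset.card_insert_of_notMem (by simp [h12, h13]),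
      Finset.card_pair h23]
  have hsum : ∑ d ∈ ({d1, d2, d3} : Finset G.D), G.finv d
      = G.finv d1 + G.finv d2 + G.finv d3 := by
    rw [Finset.sum_insert (by simp [h12, h13]), Finset.sum_pair h23]
    ring
  have h1 := sum_finv_le hG v _ hB
  rw [hcard, hsum] at h1
  have h2 := hG.curvPos v
  rw [curvature_def] at h2
  linarith

/-- No vertex carries two distinct darts whose faces both have size `≥ 20`. -/
lemma two_big (hG : G.IsPCC) {d1 d2 : G.D} (hv : G.vertexOf d1 = G.vertexOf d2)
    (hne : d1 ≠ d2) (h1 : 20 ≤ G.faceSize (G.faceOf d1))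
    (h2 : 20 ≤ G.faceSize (G.faceOf d2)) : False := by
  have h := curv_ineq₂ hG hv hne
  have f1 : G.finv d1 ≤ 1/20 := by simpa using finv_le_of_ge (by norm_num) h1
  have f2 : G.finv d2 ≤ 1/20 := by simpa using finv_le_of_ge (by norm_num) h2
  have hd : 3 ≤ G.degree (G.vertexOf d1) := hG.deg3 _
  have hn : (3:ℚ) ≤ (G.degree (G.vertexOf d1) : ℚ) := by exact_mod_cast hd
  linarith

/-- Any two darts at a common vertex with big faces coincide. -/
lemma big_unique (hG : G.IsPCC) {d1 d2 : G.D} (hv : G.vertexOf d1 = G.vertexOf d2)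
    (h1 : 20 ≤ G.faceSize (G.faceOf d1)) (h2 : 20 ≤ G.faceSize (G.faceOf d2)) :
    d1 = d2 := by
  by_contra hne
  exact two_big hG hv hne h1 h2

/-- A vertex on a big face and on a face of size `≥ 4` has degree 3. -/
lemma deg3_of_big (hG : G.IsPCC) {s y : G.D} (hv : G.vertexOf s = G.vertexOf y)
    (hne : s ≠ y) (hs : 20 ≤ G.faceSize (G.faceOf s))
    (hy : 4 ≤ G.faceSize (G.faceOf y)) : G.degree (G.vertexOf s) = 3 := by
  have h := curv_ineq₂ hG hv hne
  have f1 : G.finv s ≤ 1/20 := by simpa using finv_le_of_ge (by norm_num) hs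
  have f2 : G.finv y ≤ 1/4 := by simpa using finv_le_of_ge (by norm_num) hy
  have hd : 3 ≤ G.degree (G.vertexOf s) := hG.deg3 _
  have hn : ((G.degree (G.vertexOf s)) : ℚ) < 4 := by linarith
  have : G.degree (G.vertexOf s) < 4 := by exact_mod_cast hn
  omega

end Curvature

section Deg3

variable {G : PlaneGraph}

lemma pow3_apply (π : Equiv.Perm G.D) (x : G.D) : (π ^ 3) x = π (π (π x)) := by
  rw [pow_succ, pow_succ, pow_one, Equiv.Perm.mul_apply, Equiv.Perm.mul_apply]

lemma deg3_sigma3 {s : G.D} (hdeg : G.degree (G.vertexOf s) = 3) :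
    G.σ (G.σ (G.σ s)) = s := by
  have h := pow_degree_fix s
  rw [hdeg, pow3_apply] at h
  exact h

lemma deg3_sigma_inv {s : G.D} (hdeg : G.degree (G.vertexOf s) = 3) :
    G.σ⁻¹ s = G.σ (G.σ s) := by
  conv_lhs => rw [← deg3_sigma3 hdeg]
  simp

open scoped Classical in
lemma deg3_dartsAt (hG : G.IsPCC) {s : G.D} (hdeg : G.degree (G.vertexOf s) = 3) :
    G.dartsAt (G.vertexOf s) = {s, G.σ s, G.σ (G.σ s)} := by
  classical
  have h1 : G.σ s ≠ s := sigma_ne hG s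
  have h2 : G.σ (G.σ s) ≠ s := sigma_sigma_ne hG s
  have h3 : G.σ s ≠ G.σ (G.σ s) := fun h =>
    absurd ((Equiv.injective G.σ) h).symm (sigma_ne hG s)
  have hsub : ({s, G.σ s, G.σ (G.σ s)} : Finset G.D) ⊆ G.dartsAt (G.vertexOf s) := by
    intro x hx
    simp only [Finset.mem_insert, Finset.mem_singleton] at hx
    rcases hx with rfl | rfl | rfl
    · exact mem_dartsAt.2 rfl
    · exact mem_dartsAt.2 (vertexOf_sigma s)
    · exact mem_dartsAt.2 (by rw [vertexOf_sigma, vertexOf_sigma])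
  have hcard : ({s, G.σ s, G.σ (G.σ s)} : Finset G.D).card = 3 := by
    rw [Finset.card_insert_of_notMem (by simp [Ne.symm h1, Ne.symm h2]),
      Finset.card_pair h3]
  exact (Finset.eq_of_subset_of_card_le hsub (by rw [hcard, card_dartsAt, hdeg])).symm

/-- At a degree-3 vertex every dart is `s`, `σ s` or `σ (σ s)`. -/
lemma deg3_mem (hG : G.IsPCC) {s y : G.D} (hdeg : G.degree (G.vertexOf s) = 3)
    (hy : G.vertexOf y = G.vertexOf s) : y = s ∨ y = G.σ s ∨ y = G.σ (G.σ s) := by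
  have : y ∈ G.dartsAt (G.vertexOf s) := mem_dartsAt.2 hy
  rw [deg3_dartsAt hG hdeg] at this
  simpa using this

lemma deg3_curv (hG : G.IsPCC) {s : G.D} (hdeg : G.degree (G.vertexOf s) = 3) :
    0 < 1 - (3:ℚ)/2 + (G.finv s + G.finv (G.σ s) + G.finv (G.σ (G.σ s))) := by
  classical
  have h1 : G.σ s ≠ s := sigma_ne hG s
  have h2 : G.σ (G.σ s) ≠ s := sigma_sigma_ne hG s
  have h3 : G.σ s ≠ G.σ (G.σ s) := fun h =>
    absurd ((Equiv.injective G.σ) h).symm (sigma_ne hG s)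
  have h := hG.curvPos (G.vertexOf s)
  rw [curvature_def, deg3_dartsAt hG hdeg, hdeg] at h
  rw [Finset.sum_insert (by simp [Ne.symm h1, Ne.symm h2]),
    Finset.sum_pair h3] at h
  push_cast at h
  linarith

lemma deg3_curv_eq (hG : G.IsPCC) {s : G.D} (hdeg : G.degree (G.vertexOf s) = 3) :
    G.curvature (G.vertexOf s) =
      1 - (3:ℚ)/2 + (G.finv s + (G.finv (G.σ s) + G.finv (G.σ (G.σ s)))) := by
  classical
  have h1 : G.σ s ≠ s := sigma_ne hG s
  have h2 : G.σ (G.σ s) ≠ s := sigma_sigma_ne hG s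
  have h3 : G.σ s ≠ G.σ (G.σ s) := fun h =>
    absurd ((Equiv.injective G.σ) h).symm (sigma_ne hG s)
  rw [curvature_def, deg3_dartsAt hG hdeg, hdeg]
  rw [Finset.sum_insert (by simp [Ne.symm h1, Ne.symm h2]), Finset.sum_pair h3]
  norm_num

/-- At a degree-3 vertex on a big face, the two other faces `σs`, `σ²s`
satisfy `1/|f(σs)| + 1/|f(σ²s)| > 9/20`. -/
lemma deg3_pair (hG : G.IsPCC) {s : G.D} (hdeg : G.degree (G.vertexOf s) = 3)
    (hs : 20 ≤ G.faceSize (G.faceOf s)) :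
    9/20 < G.finv (G.σ s) + G.finv (G.σ (G.σ s)) := by
  have h := deg3_curv hG hdeg
  have f1 : G.finv s ≤ 1/20 := by simpa using finv_le_of_ge (by norm_num) hs
  linarith

end Deg3

section MoreHelpers

variable {G : PlaneGraph}

lemma phi_alpha (d : G.D) : G.φ (G.α d) = G.σ d := by
  rw [phi_apply, alpha_alpha]

lemma finv_eq {d : G.D} {m : ℕ} (h : G.faceSize (G.faceOf d) = m) :
    G.finv d = 1 / (m : ℚ) := by
  unfold finv; rw [h]

/-- A face walk never returns to the same vertex after two steps. -/
lemma phi2_vertex_ne (hG : G.IsPCC) (d : G.D) :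
    G.vertexOf (G.φ (G.φ d)) ≠ G.vertexOf d := by
  intro h
  have h1 : G.vertexOf d = G.vertexOf (G.α (G.φ d)) := by
    rw [← vertexOf_phi (G.φ d), h]
  have h2 : G.vertexOf (G.α d) = G.vertexOf (G.α (G.α (G.φ d))) := by
    rw [alpha_alpha, ← vertexOf_phi]
  have h3 := hG.noMulti d (G.α (G.φ d)) h1 h2
  rw [edgeOf_alpha] at h3
  rcases edgeOf_eq_iff'.1 h3 with h4 | h4
  · exact phi_ne hG d h4
  · exact sigma_ne hG (G.α d) (by rw [← phi_apply, h4])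

lemma pow4_apply (π : Equiv.Perm G.D) (x : G.D) : (π ^ 4) x = π (π (π (π x))) := by
  rw [pow_succ, Equiv.Perm.mul_apply, pow3_apply]

lemma pow5_apply (π : Equiv.Perm G.D) (x : G.D) : (π ^ 5) x = π (π (π (π (π x)))) := by
  rw [pow_succ, Equiv.Perm.mul_apply, pow4_apply]

lemma pow_succ_apply (π : Equiv.Perm G.D) (n : ℕ) (x : G.D) :
    (π ^ (n + 1)) x = π ((π ^ n) x) := by
  rw [pow_succ', Equiv.Perm.mul_apply]

lemma pow_apply_succ (π : Equiv.Perm G.D) (n : ℕ) (x : G.D) :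
    (π ^ (n + 1)) x = (π ^ n) (π x) := by
  rw [pow_succ, Equiv.Perm.mul_apply]

lemma pow6_apply (π : Equiv.Perm G.D) (x : G.D) :
    (π ^ 6) x = π (π (π (π (π (π x))))) := by
  rw [pow_succ, Equiv.Perm.mul_apply, pow5_apply]

lemma pow7_apply (π : Equiv.Perm G.D) (x : G.D) :
    (π ^ 7) x = π (π (π (π (π (π (π x)))))) := by
  rw [pow_succ, Equiv.Perm.mul_apply, pow6_apply]

lemma pow8_apply (π : Equiv.Perm G.D) (x : G.D) :
    (π ^ 8) x = π (π (π (π (π (π (π (π x))))))) := by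
  rw [pow_succ, Equiv.Perm.mul_apply, pow7_apply]

lemma deg4_sigma4 {s : G.D} (hdeg : G.degree (G.vertexOf s) = 4) :
    G.σ (G.σ (G.σ (G.σ s))) = s := by
  have h := pow_degree_fix s
  rw [hdeg, pow4_apply] at h
  exact h

lemma deg4_sigma_inv {s : G.D} (hdeg : G.degree (G.vertexOf s) = 4) :
    G.σ⁻¹ s = G.σ (G.σ (G.σ s)) := by
  conv_lhs => rw [← deg4_sigma4 hdeg]
  simp

lemma sigma3_ne_of_deg4 (hG : G.IsPCC) {s : G.D} (hdeg : G.degree (G.vertexOf s) = 4) :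
    G.σ (G.σ (G.σ s)) ≠ s := by
  intro h
  have h1 : (G.σ ^ 3) s = s := by rw [pow3_apply]; exact h
  have := degree_le_of_pow_fix s (by norm_num) h1
  omega

open scoped Classical in
lemma deg4_dartsAt (hG : G.IsPCC) {s : G.D} (hdeg : G.degree (G.vertexOf s) = 4) :
    G.dartsAt (G.vertexOf s) = {s, G.σ s, G.σ (G.σ s), G.σ (G.σ (G.σ s))} := by
  classical
  have h1 : G.σ s ≠ s := sigma_ne hG s
  have h2 : G.σ (G.σ s) ≠ s := sigma_sigma_ne hG s
  have h3 : G.σ (G.σ (G.σ s)) ≠ s := sigma3_ne_of_deg4 hG hdeg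
  have h12 : G.σ s ≠ G.σ (G.σ s) := fun h =>
    absurd ((Equiv.injective G.σ) h).symm (sigma_ne hG s)
  have h13 : G.σ s ≠ G.σ (G.σ (G.σ s)) := fun h =>
    absurd ((Equiv.injective G.σ) h).symm (sigma_sigma_ne hG s)
  have h23 : G.σ (G.σ s) ≠ G.σ (G.σ (G.σ s)) := fun h =>
    absurd ((Equiv.injective G.σ) ((Equiv.injective G.σ) h)).symm (sigma_ne hG s)
  have hsub : ({s, G.σ s, G.σ (G.σ s), G.σ (G.σ (G.σ s))} : Finset G.D)
      ⊆ G.dartsAt (G.vertexOf s) := by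
    intro x hx
    simp only [Finset.mem_insert, Finset.mem_singleton] at hx
    rcases hx with rfl | rfl | rfl | rfl
    · exact mem_dartsAt.2 rfl
    · exact mem_dartsAt.2 (vertexOf_sigma s)
    · exact mem_dartsAt.2 (by rw [vertexOf_sigma, vertexOf_sigma])
    · exact mem_dartsAt.2 (by rw [vertexOf_sigma, vertexOf_sigma, vertexOf_sigma])
  have hcard : ({s, G.σ s, G.σ (G.σ s), G.σ (G.σ (G.σ s))} : Finset G.D).card = 4 := by
    rw [Finset.card_insert_of_notMem (by simp [Ne.symm h1, Ne.symm h2, Ne.symm h3]),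
      Finset.card_insert_of_notMem (by simp [h12, h13]), Finset.card_pair h23]
  exact (Finset.eq_of_subset_of_card_le hsub (by rw [hcard, card_dartsAt, hdeg])).symm

lemma deg4_mem (hG : G.IsPCC) {s y : G.D} (hdeg : G.degree (G.vertexOf s) = 4)
    (hy : G.vertexOf y = G.vertexOf s) :
    y = s ∨ y = G.σ s ∨ y = G.σ (G.σ s) ∨ y = G.σ (G.σ (G.σ s)) := by
  have : y ∈ G.dartsAt (G.vertexOf s) := mem_dartsAt.2 hy
  rw [deg4_dartsAt hG hdeg] at this
  simpa using this

lemma deg4_curv (hG : G.IsPCC) {s : G.D} (hdeg : G.degree (G.vertexOf s) = 4) :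
    0 < 1 - (4:ℚ)/2 +
      (G.finv s + G.finv (G.σ s) + G.finv (G.σ (G.σ s)) + G.finv (G.σ (G.σ (G.σ s)))) := by
  classical
  have h1 : G.σ s ≠ s := sigma_ne hG s
  have h2 : G.σ (G.σ s) ≠ s := sigma_sigma_ne hG s
  have h3 : G.σ (G.σ (G.σ s)) ≠ s := sigma3_ne_of_deg4 hG hdeg
  have h12 : G.σ s ≠ G.σ (G.σ s) := fun h =>
    absurd ((Equiv.injective G.σ) h).symm (sigma_ne hG s)
  have h13 : G.σ s ≠ G.σ (G.σ (G.σ s)) := fun h =>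
    absurd ((Equiv.injective G.σ) h).symm (sigma_sigma_ne hG s)
  have h23 : G.σ (G.σ s) ≠ G.σ (G.σ (G.σ s)) := fun h =>
    absurd ((Equiv.injective G.σ) ((Equiv.injective G.σ) h)).symm (sigma_ne hG s)
  have h := hG.curvPos (G.vertexOf s)
  rw [curvature_def, deg4_dartsAt hG hdeg, hdeg] at h
  rw [Finset.sum_insert (by simp [Ne.symm h1, Ne.symm h2, Ne.symm h3]),
    Finset.sum_insert (by simp [h12, h13]), Finset.sum_pair h23] at h
  push_cast at h
  linarith

/-- Membership in a triangular face orbit. -/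
lemma face3_mem (hG : G.IsPCC) {x y : G.D} (hx : G.faceSize (G.faceOf x) = 3)
    (hy : G.faceOf y = G.faceOf x) : y = x ∨ y = G.φ x ∨ y = G.φ (G.φ x) := by
  obtain ⟨i, hilt, hi⟩ := sameCycle_exists_pow_lt G.φ (faceOf_eq_iff.1 hy.symm)
  rw [← faceSize_faceOf, hx] at hilt
  interval_cases i
  · left; rw [← hi]; rfl
  · right; left; rw [← hi, pow_one]
  · right; right; rw [← hi, pow_two, Equiv.Perm.mul_apply]

lemma deg3_sigma_inv2 {s : G.D} (hdeg : G.degree (G.vertexOf s) = 3) :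
    G.σ⁻¹ (G.σ⁻¹ s) = G.σ s := by
  have h := deg3_sigma3 hdeg
  calc G.σ⁻¹ (G.σ⁻¹ s) = G.σ⁻¹ (G.σ⁻¹ (G.σ (G.σ (G.σ s)))) := by rw [h]
  _ = G.σ s := by simp

lemma deg4_sigma_inv2 {s : G.D} (hdeg : G.degree (G.vertexOf s) = 4) :
    G.σ⁻¹ (G.σ⁻¹ s) = G.σ (G.σ s) := by
  have h := deg4_sigma4 hdeg
  calc G.σ⁻¹ (G.σ⁻¹ s) = G.σ⁻¹ (G.σ⁻¹ (G.σ (G.σ (G.σ (G.σ s))))) := by rw [h]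
  _ = G.σ (G.σ s) := by simp

end MoreHelpers


section Main

variable {G : PlaneGraph}

lemma mem_boundaryEdges {f : G.Face} {e : G.Edge} :
    e ∈ G.boundaryEdges f ↔ ∃ d, G.faceOf d = f ∧ G.edgeOf d = e := by
  rw [boundaryEdges]
  rw [Multiset.mem_map]
  constructor
  · rintro ⟨d, hd, rfl⟩
    exact ⟨d, mem_dartsOfFace.1 hd, rfl⟩
  · rintro ⟨d, hd, rfl⟩
    exact ⟨d, mem_dartsOfFace.2 hd, rfl⟩

/-- Case `e' = φ e` : two edges of the small face adjacent at a common vertex,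
both on big faces. -/
lemma core_adjacent (hG : G.IsPCC) {d d' : G.D} (hj : G.φ d = d')
    (hb : 20 ≤ G.faceSize (G.faceOf (G.α d)))
    (hb' : 20 ≤ G.faceSize (G.faceOf (G.α d'))) : False := by
  subst hj
  apply two_big hG (d1 := G.σ (G.φ d)) (d2 := G.α d) ?_ ?_ ?_ ?_
  · rw [vertexOf_sigma, vertexOf_phi]
  · intro h
    apply sigma_sigma_ne hG (G.α d)
    rw [← phi_apply, h]
  · rw [← faceOf_alpha (G.φ d)]; exact hb'
  · exact hb

lemma face4_mem (hG : G.IsPCC) {x y : G.D} (hx : G.faceSize (G.faceOf x) = 4)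
    (hy : G.faceOf y = G.faceOf x) :
    y = x ∨ y = G.φ x ∨ y = G.φ (G.φ x) ∨ y = G.φ (G.φ (G.φ x)) := by
  obtain ⟨i, hilt, hi⟩ := sameCycle_exists_pow_lt G.φ (faceOf_eq_iff.1 hy.symm)
  rw [← faceSize_faceOf, hx] at hilt
  interval_cases i
  · left; rw [← hi]; rfl
  · right; left; rw [← hi, pow_one]
  · right; right; left; rw [← hi, pow_two, Equiv.Perm.mul_apply]
  · right; right; right; rw [← hi, pow3_apply]

lemma multiset_rot {a b : ℕ} : ({a, b, b} : Multiset ℕ) = {b, b, a} := by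
  show a ::ₘ b ::ₘ {b} = b ::ₘ b ::ₘ {a}
  rw [Multiset.cons_swap]
  congr 1
  show a ::ₘ b ::ₘ 0 = b ::ₘ a ::ₘ 0
  rw [Multiset.cons_swap]

open scoped Classical in
lemma faceVector_deg3 (hG : G.IsPCC) {s : G.D} (hdeg : G.degree (G.vertexOf s) = 3) :
    G.faceVector (G.vertexOf s) = {G.faceSize (G.faceOf s), G.faceSize (G.faceOf (G.σ s)),
      G.faceSize (G.faceOf (G.σ (G.σ s)))} := by
  classical
  have h1 : G.σ s ≠ s := sigma_ne hG s
  have h2 : G.σ (G.σ s) ≠ s := sigma_sigma_ne hG s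
  have h3 : G.σ s ≠ G.σ (G.σ s) := fun h =>
    absurd ((Equiv.injective G.σ) h).symm (sigma_ne hG s)
  rw [faceVector, deg3_dartsAt hG hdeg]
  rw [Finset.insert_val_of_notMem (by simp [Ne.symm h1, Ne.symm h2]),
    Finset.insert_val_of_notMem (by simp [h3])]
  simp

open scoped Classical in
lemma dartsAt_filter (v : G.Vertex) :
    (Finset.univ.filter (fun d => G.vertexOf d = v)) = G.dartsAt v := by
  ext d
  simp [mem_dartsAt, Finset.mem_filter]

open scoped Classical in
lemma dartsOfFace_filter (f : G.Face) :
    (Finset.univ.filter (fun d => G.faceOf d = f)) = G.dartsOfFace f := by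
  ext d
  simp [mem_dartsOfFace, Finset.mem_filter]

lemma faceSize_pos' (f : G.Face) : 0 < G.faceSize f := by
  induction f using Quotient.ind with
  | _ D => exact faceSize_pos D

/-- Gauss–Bonnet: on the sphere the total curvature is `2`. -/
lemma gauss_bonnet (hG : G.IsPCC) : ∑ v : G.Vertex, G.curvature v = 2 := by
  classical
  -- total degree
  have hVD : ∑ v : G.Vertex, (G.degree v : ℚ) = (Fintype.card G.D : ℚ) := by
    have h1 : (Finset.univ : Finset G.D).card =
        ∑ v : G.Vertex, (Finset.univ.filter (fun d => G.vertexOf d = v)).card :=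
      Finset.card_eq_sum_card_fiberwise (fun x _ => Finset.mem_univ _)
    rw [← Finset.card_univ]
    rw [h1]
    push_cast
    apply Finset.sum_congr rfl
    intro v _
    rw [dartsAt_filter, card_dartsAt]
  -- total of 1/|face|
  have hDF : ∑ d : G.D, G.finv d = (Fintype.card G.Face : ℚ) := by
    have h1 : ∑ f : G.Face, ∑ d ∈ Finset.univ.filter (fun d => G.faceOf d = f), G.finv d
        = ∑ d : G.D, G.finv d :=
      Finset.sum_fiberwise_of_maps_to (fun x _ => Finset.mem_univ _) _
    rw [← h1, ← Finset.card_univ, Finset.card_eq_sum_ones]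
    push_cast
    apply Finset.sum_congr rfl
    intro f _
    rw [dartsOfFace_filter]
    have hsz : ∀ d ∈ G.dartsOfFace f, G.finv d = 1 / (G.faceSize f : ℚ) := by
      intro d hd
      rw [finv, mem_dartsOfFace.1 hd]
    rw [Finset.sum_congr rfl hsz, Finset.sum_const, nsmul_eq_mul]
    rw [show (G.dartsOfFace f).card = G.faceSize f from rfl]
    have hpos := faceSize_pos' f
    field_simp
  -- total degree is twice the number of edges
  have hDE : (Fintype.card G.D : ℚ) = 2 * (Fintype.card G.Edge : ℚ) := by
    have h1 : (Finset.univ : Finset G.D).card =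
        ∑ e : G.Edge, (Finset.univ.filter (fun d => G.edgeOf d = e)).card :=
      Finset.card_eq_sum_card_fiberwise (fun x _ => Finset.mem_univ _)
    have h2 : ∀ e : G.Edge, (Finset.univ.filter (fun d => G.edgeOf d = e)).card = 2 := by
      intro e
      induction e using Quotient.ind with
      | _ D =>
        show (Finset.univ.filter (fun d => G.edgeOf d = G.edgeOf D)).card = 2
        have hD : (Finset.univ.filter (fun d => G.edgeOf d = G.edgeOf D)) = {D, G.α D} := by
          ext x
          simp only [Finset.mem_filter, Finset.mem_univ, true_and, Finset.mem_insert,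
            Finset.mem_singleton]
          constructor
          · intro h
            exact edgeOf_eq_iff'.1 h.symm
          · rintro (rfl | rfl)
            · rfl
            · rw [edgeOf_alpha]
        rw [hD, Finset.card_pair (Ne.symm (G.α_fixfree D))]
    rw [← Finset.card_univ, h1]
    rw [Finset.sum_congr rfl (fun e _ => h2 e), Finset.sum_const, Finset.card_univ,
      smul_eq_mul]
    push_cast
    ring
  -- the double sum of 1/|face|
  have hVF : ∑ v : G.Vertex, (∑ d ∈ G.dartsAt v, G.finv d) = (Fintype.card G.Face : ℚ) := by
    rw [← hDF]
    have h1 : ∑ v : G.Vertex, ∑ d ∈ Finset.univ.filter (fun d => G.vertexOf d = v), G.finv d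
        = ∑ d : G.D, G.finv d :=
      Finset.sum_fiberwise_of_maps_to (fun x _ => Finset.mem_univ _) _
    rw [← h1]
    exact Finset.sum_congr rfl (fun v _ => by rw [dartsAt_filter])
  -- assemble
  have hS := hG.2.2.2.1
  rw [IsSphere] at hS
  have hSq : (Fintype.card G.Vertex : ℚ) - (Fintype.card G.Edge : ℚ)
      + (Fintype.card G.Face : ℚ) = 2 := by exact_mod_cast hS
  have hsum : ∑ v : G.Vertex, G.curvature v =
      (Fintype.card G.Vertex : ℚ) - (∑ v : G.Vertex, (G.degree v : ℚ))/2
        + ∑ v : G.Vertex, (∑ d ∈ G.dartsAt v, G.finv d) := by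
    simp only [curvature_def]
    rw [Finset.sum_add_distrib, Finset.sum_sub_distrib, Finset.sum_const, Finset.card_univ,
      ← Finset.sum_div]
    push_cast
    ring
  rw [hsum, hVD, hVF, hDE]
  linarith

/-- One step of the strip propagation around a big face: `b` is a boundary
dart of the big face `Σ`, the face across `b`'s edge is a square whose
opposite edge lies on the big face of `b'`; then the same holds for `φ b`. -/
lemma strip_step (hG : G.IsPCC) {b b' : G.D}
    (hσb : 20 ≤ G.faceSize (G.faceOf b)) (hσb' : 20 ≤ G.faceSize (G.faceOf b'))
    (h4 : G.faceSize (G.faceOf (G.α b)) = 4)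
    (hside : G.faceOf (G.α (G.φ (G.φ (G.α b)))) = G.faceOf b') :
    G.faceSize (G.faceOf (G.α (G.φ b))) = 4 ∧
    G.faceOf (G.α (G.φ (G.φ (G.α (G.φ b))))) = G.faceOf b' ∧
    G.σ (G.φ (G.φ (G.φ (G.α b)))) = G.φ (G.φ (G.α (G.φ b))) ∧
    G.φ (G.α (G.φ (G.φ (G.α (G.φ b))))) = G.α (G.φ (G.φ (G.α b))) ∧
    G.σ (G.σ (G.φ b)) = G.α b ∧
    G.degree (G.vertexOf (G.φ b)) = 3 ∧
    G.degree (G.vertexOf (G.α (G.φ (G.φ (G.α b))))) = 3 ∧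
    G.α (G.φ (G.φ (G.φ (G.α b)))) = G.σ (G.φ b) := by
  have hxinv : G.α b = G.σ⁻¹ (G.φ b) := alpha_eq_inv_phi b
  have hfb : G.faceOf (G.φ b) = G.faceOf b := faceOf_phi b
  have hd1 : G.degree (G.vertexOf (G.φ b)) = 3 := by
    apply deg3_of_big hG (vertexOf_phi b) ?_ (by rw [hfb]; exact hσb) (by rw [h4])
    intro h
    apply sigma_ne hG (G.φ b)
    conv_lhs => rw [h, hxinv]
    simp
  have hrot1 : G.σ (G.σ (G.φ b)) = G.α b := by
    rw [hxinv, deg3_sigma_inv hd1]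
  have hquad : G.φ (G.φ (G.φ (G.φ (G.α b)))) = G.α b := by
    have h := pow_faceSize_fix (G.α b); rw [h4, pow4_apply] at h; exact h
  have hKEY : G.α (G.φ (G.φ (G.φ (G.α b)))) = G.σ (G.φ b) := by
    rw [alpha_eq_inv_phi, hquad, hxinv, deg3_sigma_inv2 hd1]
  -- size of the next ring face
  have hp := deg3_pair hG hd1 (by rw [hfb]; exact hσb)
  rw [hrot1] at hp
  have hf4 : G.finv (G.α b) = 1/4 := finv_eq h4
  have hnext : G.faceSize (G.faceOf (G.σ (G.φ b))) < 5 := by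
    apply faceSize_lt_of_finv_gt (m := 5) (by norm_num)
    push_cast
    rw [hf4] at hp
    linarith
  have hnext3 : 3 ≤ G.faceSize (G.faceOf (G.σ (G.φ b))) := three_le_faceSize hG _
  have hfnext : G.faceOf (G.α (G.φ b)) = G.faceOf (G.σ (G.φ b)) := faceOf_alpha (G.φ b)
  -- the far vertex of the Σ'-edge
  have hy'f : G.faceSize (G.faceOf (G.α (G.φ (G.φ (G.α b))))) = G.faceSize (G.faceOf b') := by
    rw [hside]
  have hy'inv : G.α (G.φ (G.φ (G.α b))) = G.σ⁻¹ (G.φ (G.φ (G.φ (G.α b)))) :=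
    alpha_eq_inv_phi _
  have hy'σ : G.σ (G.α (G.φ (G.φ (G.α b)))) = G.φ (G.φ (G.φ (G.α b))) := by
    rw [hy'inv]; simp
  have hf3x : G.faceSize (G.faceOf (G.φ (G.φ (G.φ (G.α b))))) = 4 := by
    rw [faceOf_phi, faceOf_phi, faceOf_phi]; exact h4
  have hdc : G.degree (G.vertexOf (G.α (G.φ (G.φ (G.α b))))) = 3 := by
    apply deg3_of_big hG (vertexOf_phi _).symm ?_
      (by rw [hside]; exact hσb') (by rw [hf3x])
    intro h
    apply sigma_ne hG (G.φ (G.φ (G.φ (G.α b))))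
    rw [← h, hy'σ]
    exact h.symm
  have hphix1 : G.φ (G.α (G.φ b)) = G.σ (G.φ b) := phi_alpha (G.φ b)
  have hpin : G.φ (G.φ (G.α (G.φ b))) = G.σ (G.φ (G.φ (G.φ (G.α b)))) := by
    rw [hphix1, ← hKEY, phi_alpha]
  have hy'2 : G.σ (G.σ (G.α (G.φ (G.φ (G.α b))))) = G.φ (G.φ (G.α (G.φ b))) := by
    rw [hy'σ, hpin]
  have hystep : G.φ (G.α (G.φ (G.φ (G.α (G.φ b))))) = G.α (G.φ (G.φ (G.α b))) := by
    rw [phi_alpha, ← hy'2]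
    exact deg3_sigma3 hdc
  have hside' : G.faceOf (G.α (G.φ (G.φ (G.α (G.φ b))))) = G.faceOf b' := by
    rw [← faceOf_phi (G.α (G.φ (G.φ (G.α (G.φ b))))), hystep, hside]
  -- rule out the triangle case
  have hsz4 : G.faceSize (G.faceOf (G.α (G.φ b))) = 4 := by
    rcases (by omega : G.faceSize (G.faceOf (G.σ (G.φ b))) = 3 ∨
        G.faceSize (G.faceOf (G.σ (G.φ b))) = 4) with h3 | h4'
    · exfalso
      have hx1sz : G.faceSize (G.faceOf (G.α (G.φ b))) = 3 := by rw [hfnext, h3]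
      have htri : G.φ (G.φ (G.φ (G.α (G.φ b)))) = G.α (G.φ b) := by
        have h := pow_faceSize_fix (G.α (G.φ b)); rw [hx1sz, pow3_apply] at h; exact h
      have hx1inv : G.α (G.φ b) = G.σ⁻¹ (G.φ (G.φ b)) := alpha_eq_inv_phi (G.φ b)
      have hzv : G.vertexOf (G.α (G.φ (G.φ (G.α (G.φ b))))) = G.vertexOf (G.φ (G.φ b)) := by
        rw [← vertexOf_phi, htri, ← vertexOf_phi]
      have hzne : G.α (G.φ (G.φ (G.α (G.φ b)))) ≠ G.φ (G.φ b) := by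
        intro h
        apply sigma_sigma_ne hG (G.φ (G.φ b))
        have h2 : G.σ⁻¹ (G.φ (G.φ (G.φ (G.α (G.φ b))))) = G.φ (G.φ b) := by
          rw [← alpha_eq_inv_phi]; exact h
        rw [htri, hx1inv] at h2
        conv_lhs => rw [← h2]
        simp
      exact two_big hG hzv hzne (by rw [hside']; exact hσb')
        (by rw [faceOf_phi, faceOf_phi]; exact hσb)
    · rw [hfnext, h4']
  exact ⟨hsz4, hside', hpin.symm, hystep, hrot1, hd1, hdc, hKEY⟩

/-- The square strip case: `κ` is a square with two opposite edges on big
faces. -/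
lemma core2_square (hG : G.IsPCC) {d d' : G.D}
    (hj : G.φ (G.φ d) = d')
    (hk4 : G.faceSize (G.faceOf d) = 4)
    (hc4 : G.faceSize (G.faceOf (G.σ (G.φ d))) = 4)
    (hb : 20 ≤ G.faceSize (G.faceOf (G.α d)))
    (hb' : 20 ≤ G.faceSize (G.faceOf (G.α d'))) : False := by
  classical
  obtain ⟨s, hs⟩ : ∃ s : ℕ → G.D, ∀ t, s t = (G.φ ^ t) (G.α d) := ⟨_, fun _ => rfl⟩
  have hs0 : s 0 = G.α d := by rw [hs]; simp
  have hssucc : ∀ t, s (t + 1) = G.φ (s t) := by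
    intro t; rw [hs, hs, pow_succ_apply]
  have hsface : ∀ t, G.faceOf (s t) = G.faceOf (G.α d) := by
    intro t
    induction t with
    | zero => rw [hs0]
    | succ u ih => rw [hssucc, faceOf_phi, ih]
  have hsize : ∀ t, 20 ≤ G.faceSize (G.faceOf (s t)) := by
    intro t; rw [hsface]; exact hb
  have hI : ∀ t, G.faceSize (G.faceOf (G.α (s t))) = 4 ∧
      G.faceOf (G.α (G.φ (G.φ (G.α (s t))))) = G.faceOf (G.α d') := by
    intro t
    induction t with
    | zero =>
      constructor
      · rw [hs0, alpha_alpha]; exact hk4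
      · rw [hs0, alpha_alpha, hj]
    | succ u ih =>
      have h := strip_step hG (hsize u) hb' ih.1 ih.2
      rw [← hssucc u] at h
      exact ⟨h.1, h.2.1⟩
  have hstep := fun t => strip_step hG (hsize t) hb' (hI t).1 (hI t).2
  -- periodicity and injectivity along the big face
  set n := G.faceSize (G.faceOf (G.α d)) with hndef
  have hn20 : 20 ≤ n := hb
  have hsn : s n = s 0 := by
    rw [hs n, hs0, hndef]
    exact pow_faceSize_fix (G.α d)
  have hper : ∀ t, s (t + n) = s t := by
    intro t
    rw [hs, hs, pow_add, Equiv.Perm.mul_apply]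
    rw [show (G.φ ^ n) (G.α d) = G.α d from by rw [hndef]; exact pow_faceSize_fix (G.α d)]
  have hmod : ∀ t, s (t % n) = s t := by
    intro t
    rw [hs, hs, hndef]
    exact pow_mod_fix G.φ (G.α d) _ (pow_faceSize_fix (G.α d)) t
  have horb : n = (permOrbit G.φ (G.α d)).card := by
    rw [hndef]; exact faceSize_faceOf (G.α d)
  have hinj : ∀ {t u}, t < n → u < n → s t = s u → t = u := by
    intro t u ht hu h
    rw [hs, hs] at h
    exact pow_inj_on_permOrbit G.φ (G.α d) (horb ▸ ht) (horb ▸ hu) h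
  -- the opposite row
  obtain ⟨Y, hY⟩ : ∃ Y : ℕ → G.D, ∀ t, Y t = G.α (G.φ (G.φ (G.α (s t)))) :=
    ⟨_, fun _ => rfl⟩
  have hYface : ∀ t, G.faceOf (Y t) = G.faceOf (G.α d') := by
    intro t; rw [hY]; exact (hI t).2
  have hYsize : ∀ t, 20 ≤ G.faceSize (G.faceOf (Y t)) := by
    intro t; rw [hYface]; exact hb'
  have hYstep : ∀ t, G.φ (Y (t + 1)) = Y t := by
    intro t
    rw [hY, hY, hssucc]
    exact (hstep t).2.2.2.1
  have hYper : ∀ t, Y (t + n) = Y t := by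
    intro t; rw [hY, hY, hper]
  have hYinj : ∀ {t u}, t < n → u < n → Y t = Y u → t = u := by
    intro t u ht hu h
    rw [hY, hY] at h
    have h1 := Equiv.injective G.α h
    have h2 := Equiv.injective G.φ (Equiv.injective G.φ h1)
    exact hinj ht hu (Equiv.injective G.α h2)
  have hYfix : (G.φ ^ n) (Y 0) = Y 0 := by
    have haux : ∀ k, (G.φ ^ k) (Y k) = Y 0 := by
      intro k
      induction k with
      | zero => simp
      | succ u ih => rw [pow_apply_succ, hYstep, ih]
    have := haux n
    rwa [show Y n = Y 0 from by have := hYper 0; simpa using this] at this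
  have hn' : G.faceSize (G.faceOf (G.α d')) = n := by
    have hle : G.faceSize (G.faceOf (Y 0)) ≤ n := by
      rw [faceSize_faceOf]
      exact permOrbit_card_le G.φ (Y 0) n (by omega) hYfix
    have hge : n ≤ G.faceSize (G.faceOf (Y 0)) := by
      have himg : (Finset.range n).image Y ⊆ permOrbit G.φ (Y 0) := by
        intro x hx
        obtain ⟨t, -, rfl⟩ := Finset.mem_image.1 hx
        exact mem_permOrbit.2 (faceOf_eq_iff.1 ((hYface 0).trans (hYface t).symm))
      have hcard : ((Finset.range n).image Y).card = n := by
        rw [Finset.card_image_of_injOn, Finset.card_range]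
        intro t ht u hu h
        exact hYinj (Finset.mem_range.1 ht) (Finset.mem_range.1 hu) h
      calc n = ((Finset.range n).image Y).card := hcard.symm
      _ ≤ (permOrbit G.φ (Y 0)).card := Finset.card_le_card himg
      _ = G.faceSize (G.faceOf (Y 0)) := (faceSize_faceOf (Y 0)).symm
    have h2 : G.faceSize (G.faceOf (Y 0)) = G.faceSize (G.faceOf (G.α d')) := by
      rw [hYface 0]
    omega
  -- rotation facts
  have hσx : ∀ t, G.σ (G.α (s t)) = s (t + 1) := by
    intro t; rw [hssucc]; exact (phi_apply (s t)).symm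
  have hrot : ∀ t, G.σ (G.σ (s (t + 1))) = G.α (s t) := by
    intro t
    have h := (hstep t).2.2.2.2.1
    rwa [← hssucc] at h
  have hdegW : ∀ t, G.degree (G.vertexOf (s (t + 1))) = 3 := by
    intro t
    have h := (hstep t).2.2.2.2.2.1
    rwa [← hssucc] at h
  have hdegC : ∀ t, G.degree (G.vertexOf (Y t)) = 3 := by
    intro t
    have h := (hstep t).2.2.2.2.2.2.1
    rwa [← hY] at h
  have hKEYt : ∀ t, G.α (G.φ (G.φ (G.φ (G.α (s t))))) = G.σ (s (t + 1)) := by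
    intro t
    have h := (hstep t).2.2.2.2.2.2.2
    rwa [← hssucc] at h
  have hpin : ∀ t, G.σ (G.φ (G.φ (G.φ (G.α (s t))))) = G.φ (G.φ (G.α (s (t + 1)))) := by
    intro t
    have h := (hstep t).2.2.1
    rwa [← hssucc] at h
  have hσY : ∀ t, G.σ (Y t) = G.φ (G.φ (G.φ (G.α (s t)))) := by
    intro t; rw [hY, alpha_eq_inv_phi]; simp
  have hσφ2x : ∀ t, G.σ (G.φ (G.φ (G.α (s (t + 1))))) = Y t := by
    intro t
    have h := hYstep t
    rwa [phi_apply, hY (t + 1), alpha_alpha] at h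
  have hst : ∀ t, ∃ u, s t = s (u + 1) := by
    intro t
    cases t with
    | zero =>
      refine ⟨n - 1, ?_⟩
      rw [show n - 1 + 1 = n from by omega]
      exact hsn.symm
    | succ u => exact ⟨u, rfl⟩
  -- closure : every dart belongs to the strip
  have hPmem : ∀ D : G.D, ∃ t, D = s t ∨ D = G.α (s t) ∨ D = G.φ (G.α (s t)) ∨
      D = G.φ (G.φ (G.α (s t))) ∨ D = G.φ (G.φ (G.φ (G.α (s t)))) ∨ D = Y t := by
    intro D
    have hpath := hG.1 (G.α d) D
    induction hpath with
    | refl => exact ⟨0, Or.inl hs0.symm⟩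
    | tail hseg hrel ih =>
      obtain ⟨t, hcase⟩ := ih
      rcases hrel with h | h
      · rcases hcase with h1 | h1 | h1 | h1 | h1 | h1 <;> rw [h1] at h
        · exact ⟨t, Or.inr <| Or.inr <| Or.inl <| by rw [← h, phi_alpha]⟩
        · exact ⟨t + 1, Or.inl <| by rw [← h, hσx]⟩
        · obtain ⟨u, hu⟩ := hst t
          refine ⟨u, Or.inr <| Or.inl ?_⟩
          rw [← h, phi_alpha, hu, hrot u]
        · obtain ⟨u, hu⟩ := hst t
          refine ⟨u, Or.inr <| Or.inr <| Or.inr <| Or.inr <| Or.inr ?_⟩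
          rw [← h, hu, hσφ2x u]
        · exact ⟨t + 1, Or.inr <| Or.inr <| Or.inr <| Or.inl <| by rw [← h, hpin t]⟩
        · exact ⟨t, Or.inr <| Or.inr <| Or.inr <| Or.inr <| Or.inl <| by rw [← h, hσY t]⟩
      · rcases hcase with h1 | h1 | h1 | h1 | h1 | h1 <;> rw [h1] at h
        · exact ⟨t, Or.inr <| Or.inl h.symm⟩
        · exact ⟨t, Or.inl <| by rw [← h, alpha_alpha]⟩
        · obtain ⟨u, hu⟩ := hst t
          refine ⟨u, Or.inr <| Or.inr <| Or.inr <| Or.inr <| Or.inl ?_⟩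
          rw [← h, phi_alpha, hu, ← hKEYt u, alpha_alpha]
        · exact ⟨t, Or.inr <| Or.inr <| Or.inr <| Or.inr <| Or.inr <| by rw [← h, ← hY]⟩
        · exact ⟨t + 1, Or.inr <| Or.inr <| Or.inl <| by
            rw [← h, hKEYt t, phi_alpha]⟩
        · exact ⟨t, Or.inr <| Or.inr <| Or.inr <| Or.inl <| by
            rw [← h, hY, alpha_alpha]⟩
  -- classification of vertices
  have hnpos : 0 < n := by omega
  have vmod : ∀ t, G.vertexOf (s t) = G.vertexOf (s (t % n)) :=
    fun t => congrArg G.vertexOf (hmod t).symm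
  have hYmod : ∀ t, Y (t % n) = Y t := by
    intro t; rw [hY, hY, hmod]
  have vYmod : ∀ t, G.vertexOf (Y t) = G.vertexOf (Y (t % n)) :=
    fun t => congrArg G.vertexOf (hYmod t).symm
  have hvertAll : ∀ D : G.D, (∃ t < n, G.vertexOf D = G.vertexOf (s t)) ∨
      (∃ t < n, G.vertexOf D = G.vertexOf (Y t)) := by
    intro D
    obtain ⟨t, hcase⟩ := hPmem D
    rcases hcase with h1 | h1 | h1 | h1 | h1 | h1 <;> subst h1
    · exact Or.inl ⟨t % n, Nat.mod_lt _ hnpos, vmod t⟩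
    · refine Or.inl ⟨(t+1) % n, Nat.mod_lt _ hnpos, ?_⟩
      rw [← vmod (t+1), hssucc, vertexOf_phi]
    · refine Or.inl ⟨t % n, Nat.mod_lt _ hnpos, ?_⟩
      rw [phi_alpha, vertexOf_sigma, vmod t]
    · obtain ⟨u, hu⟩ := hst t
      refine Or.inr ⟨u % n, Nat.mod_lt _ hnpos, ?_⟩
      rw [hu, ← vYmod u, ← hσφ2x u, vertexOf_sigma]
    · refine Or.inr ⟨t % n, Nat.mod_lt _ hnpos, ?_⟩
      rw [← vYmod t, hY, ← vertexOf_phi]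
    · exact Or.inr ⟨t % n, Nat.mod_lt _ hnpos, vYmod t⟩
  have hvert : ∀ v : G.Vertex, (∃ t < n, v = G.vertexOf (s t)) ∨
      (∃ t < n, v = G.vertexOf (Y t)) := by
    intro v
    induction v using Quotient.ind with
    | _ D => exact hvertAll D
  -- curvature of every vertex is 1/n
  have hfn : ∀ t, G.finv (s t) = 1 / (n : ℚ) := by
    intro t
    apply finv_eq
    rw [hsface t]
  have hf4 : ∀ t, G.finv (G.α (s t)) = 1 / 4 := by
    intro t
    have := finv_eq (G := G) (hI t).1
    simpa using this
  have hcurvW : ∀ t, G.curvature (G.vertexOf (s (t + 1))) = 1 / (n : ℚ) := by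
    intro t
    rw [deg3_curv_eq hG (hdegW t)]
    have e1 : G.finv (G.σ (s (t + 1))) = 1 / 4 := by
      rw [show G.σ (s (t+1)) = G.φ (G.α (s (t+1))) from (phi_alpha _).symm]
      rw [finv, faceOf_phi, ← finv]
      exact hf4 (t+1)
    have e2 : G.finv (G.σ (G.σ (s (t + 1)))) = 1 / 4 := by
      rw [hrot t]
      exact hf4 t
    rw [hfn (t+1), e1, e2]
    ring
  have hcurvC : ∀ t, G.curvature (G.vertexOf (Y t)) = 1 / (n : ℚ) := by
    intro t
    rw [deg3_curv_eq hG (hdegC t)]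
    have e0 : G.finv (Y t) = 1 / (n : ℚ) := by
      apply finv_eq
      rw [hYface t, hn']
    have e1 : G.finv (G.σ (Y t)) = 1 / 4 := by
      rw [hσY t, finv, faceOf_phi, faceOf_phi, faceOf_phi, ← finv]
      exact hf4 t
    have e2 : G.finv (G.σ (G.σ (Y t))) = 1 / 4 := by
      rw [hσY t, hpin t, finv, faceOf_phi, faceOf_phi, ← finv]
      exact hf4 (t+1)
    rw [e0, e1, e2]
    ring
  have hcurvAll : ∀ v : G.Vertex, G.curvature v = 1 / (n : ℚ) := by
    intro v
    rcases hvert v with ⟨t, -, rfl⟩ | ⟨t, -, rfl⟩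
    · obtain ⟨u, hu⟩ := hst t
      rw [hu]
      exact hcurvW u
    · exact hcurvC t
  -- Gauss-Bonnet gives the number of vertices
  have hGB := gauss_bonnet hG
  rw [Finset.sum_congr rfl (fun v _ => hcurvAll v), Finset.sum_const,
    Finset.card_univ, nsmul_eq_mul] at hGB
  have hcardV : Fintype.card G.Vertex = 2 * n := by
    have hnq : (n : ℚ) ≠ 0 := by
      intro h
      rw [show (n:ℚ) = ((n:ℕ):ℚ) from rfl] at h
      exact_mod_cast absurd (by exact_mod_cast h : n = 0) (by omega)
    field_simp at hGB
    have hGB' : (Fintype.card G.Vertex : ℚ) = 2 * n := by linarith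
    exact_mod_cast hGB'
  -- the two big faces are distinct
  by_cases heqf : G.faceOf (G.α d) = G.faceOf (G.α d')
  · -- same big face : all vertices lie on one row, contradiction with 2n vertices
    have hsub : (Finset.univ : Finset G.Vertex) ⊆
        (Finset.range n).image (fun t => G.vertexOf (s t)) := by
      intro v _
      rcases hvert v with ⟨t, ht, rfl⟩ | ⟨t, ht, rfl⟩
      · exact Finset.mem_image.2 ⟨t, Finset.mem_range.2 ht, rfl⟩
      · have hsc : G.φ.SameCycle (G.α d) (Y t) :=
          faceOf_eq_iff.1 (heqf.trans (hYface t).symm)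
        obtain ⟨k, hk, hke⟩ := sameCycle_exists_pow_lt G.φ hsc
        rw [← horb] at hk
        refine Finset.mem_image.2 ⟨k, Finset.mem_range.2 hk, ?_⟩
        rw [hs k, hke]
    have hle : Fintype.card G.Vertex ≤ n := by
      rw [← Finset.card_univ]
      exact le_trans (Finset.card_le_card hsub)
        (le_trans Finset.card_image_le (by simp))
    omega
  · -- distinct big faces : the graph is a prism, contradiction
    apply hG.2.2.2.2.2.2.1
    refine ⟨n, hcardV, ?_, ?_⟩
    · -- face vector of every vertex
      intro v
      rcases hvert v with ⟨t, -, rfl⟩ | ⟨t, -, rfl⟩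
      · obtain ⟨u, hu⟩ := hst t
        rw [hu, faceVector_deg3 hG (hdegW u)]
        rw [show G.faceSize (G.faceOf (s (u+1))) = n from by rw [hsface]]
        rw [show G.faceSize (G.faceOf (G.σ (s (u+1)))) = 4 from by
          rw [← phi_alpha, faceOf_phi]; exact (hI (u+1)).1]
        rw [show G.faceSize (G.faceOf (G.σ (G.σ (s (u+1))))) = 4 from by
          rw [hrot u]; exact (hI u).1]
        exact multiset_rot
      · rw [faceVector_deg3 hG (hdegC t)]
        rw [show G.faceSize (G.faceOf (Y t)) = n from by rw [hYface t, hn']]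
        rw [show G.faceSize (G.faceOf (G.σ (Y t))) = 4 from by
          rw [hσY t, faceOf_phi, faceOf_phi, faceOf_phi]; exact (hI t).1]
        rw [show G.faceSize (G.faceOf (G.σ (G.σ (Y t)))) = 4 from by
          rw [hσY t, hpin t, faceOf_phi, faceOf_phi]; exact (hI (t+1)).1]
        exact multiset_rot
    · -- multiset of all face sizes
      have hrinj : ∀ {t u}, t < n → u < n →
          G.faceOf (G.α (s t)) = G.faceOf (G.α (s u)) → t = u := by
        intro t u ht hu h
        rcases face4_mem hG (hI t).1 h.symm with h1 | h1 | h1 | h1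
        · exact (hinj hu ht (Equiv.injective G.α h1)).symm
        · exfalso
          have h2 : s u = G.α (G.φ (G.α (s t))) := by
            rw [← h1, alpha_alpha]
          obtain ⟨u', hu'⟩ := hst t
          have h3 : G.faceOf (s u) = G.faceOf (G.α (s u')) := by
            rw [h2, faceOf_alpha, phi_alpha, hu', hrot u']
          have h4 : G.faceSize (G.faceOf (s u)) = G.faceSize (G.faceOf (G.α (s u'))) := by
            rw [h3]
          rw [hsface u] at h4
          have := (hI u').1
          omega
        · exfalso
          have h2 : s u = Y t := by
            rw [hY, ← h1, alpha_alpha]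
          apply heqf
          rw [← hsface u, h2, hYface t]
        · exfalso
          have h2 : s u = G.σ (s (t+1)) := by
            rw [← hKEYt t, ← h1, alpha_alpha]
          have h3 : G.faceOf (s u) = G.faceOf (G.α (s (t+1))) := by
            rw [h2, ← faceOf_alpha]
          have h4 : G.faceSize (G.faceOf (s u)) = G.faceSize (G.faceOf (G.α (s (t+1)))) := by
            rw [h3]
          rw [hsface u] at h4
          have := (hI (t+1)).1
          omega
      have hfaceAll : ∀ f : G.Face, f = G.faceOf (G.α d) ∨ f = G.faceOf (G.α d') ∨
          ∃ t < n, f = G.faceOf (G.α (s t)) := by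
        intro f
        induction f using Quotient.ind with
        | _ D =>
        show G.faceOf D = G.faceOf (G.α d) ∨ G.faceOf D = G.faceOf (G.α d') ∨
          ∃ t < n, G.faceOf D = G.faceOf (G.α (s t))
        rcases hvertAll D with ⟨t, ht, hv⟩ | ⟨t, ht, hv⟩
        · obtain ⟨u, hu⟩ := hst t
          rw [hu] at hv
          rcases deg3_mem hG (hdegW u) hv with h1 | h1 | h1 <;> subst h1
          · exact Or.inl (hsface (u+1))
          · refine Or.inr (Or.inr ⟨(u+1) % n, Nat.mod_lt _ hnpos, ?_⟩)
            rw [← faceOf_alpha, hmod]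
          · refine Or.inr (Or.inr ⟨u % n, Nat.mod_lt _ hnpos, ?_⟩)
            rw [hrot u, hmod]
        · rcases deg3_mem hG (hdegC t) hv with h1 | h1 | h1 <;> subst h1
          · exact Or.inr (Or.inl (hYface t))
          · refine Or.inr (Or.inr ⟨t % n, Nat.mod_lt _ hnpos, ?_⟩)
            rw [hσY t, faceOf_phi, faceOf_phi, faceOf_phi, hmod]
          · refine Or.inr (Or.inr ⟨(t+1) % n, Nat.mod_lt _ hnpos, ?_⟩)
            rw [hσY t, hpin t, faceOf_phi, faceOf_phi, hmod]
      have hFuniv : (Finset.univ : Finset G.Face) =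
          insert (G.faceOf (G.α d)) (insert (G.faceOf (G.α d'))
            ((Finset.range n).image (fun t => G.faceOf (G.α (s t))))) := by
        ext f
        simp only [Finset.mem_univ, true_iff, Finset.mem_insert, Finset.mem_image,
          Finset.mem_range]
        rcases hfaceAll f with h | h | ⟨t, ht, h⟩
        · exact Or.inl h
        · exact Or.inr (Or.inl h)
        · exact Or.inr (Or.inr ⟨t, ht, h.symm⟩)
      have hSignotin2 : G.faceOf (G.α d') ∉
          (Finset.range n).image (fun t => G.faceOf (G.α (s t))) := by
        simp only [Finset.mem_image, Finset.mem_range, not_exists]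
        rintro t ⟨ht, h⟩
        have h4 : G.faceSize (G.faceOf (G.α (s t))) =
            G.faceSize (G.faceOf (G.α d')) := by rw [h]
        have := (hI t).1
        omega
      have hSignotin1 : G.faceOf (G.α d) ∉ insert (G.faceOf (G.α d'))
          ((Finset.range n).image (fun t => G.faceOf (G.α (s t)))) := by
        simp only [Finset.mem_insert, Finset.mem_image, Finset.mem_range, not_or, not_exists]
        refine ⟨heqf, ?_⟩
        rintro t ⟨ht, h⟩
        have h4 : G.faceSize (G.faceOf (G.α (s t))) =
            G.faceSize (G.faceOf (G.α d)) := by rw [h]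
        have := (hI t).1
        omega
      rw [allFaceSizes, hFuniv]
      rw [Finset.insert_val_of_notMem hSignotin1, Finset.insert_val_of_notMem hSignotin2]
      rw [Finset.image_val_of_injOn (fun t ht u hu h =>
        hrinj (Finset.mem_range.1 ht) (Finset.mem_range.1 hu) h)]
      rw [Multiset.map_cons, Multiset.map_cons, Multiset.map_map]
      rw [show G.faceSize (G.faceOf (G.α d')) = n from hn']
      have hmapconst :
          Multiset.map (fun t => G.faceSize (G.faceOf (G.α (s t)))) (Finset.range n).val
            = Multiset.replicate n 4 := by
        rw [Multiset.map_congr rfl (fun t _ => (hI t).1)]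
        rw [Multiset.map_const']
        congr 1
        exact Finset.card_range n
      rw [show (G.faceSize ∘ fun t => G.faceOf (G.α (s t))) =
        (fun t => G.faceSize (G.faceOf (G.α (s t)))) from rfl]
      rw [hmapconst]
      rw [add_comm]
      rfl

/-- Case `e' = φ² e`. -/
lemma core2 (hG : G.IsPCC) {d d' : G.D}
    (hj : G.φ (G.φ d) = d')
    (hκ : G.faceSize (G.faceOf d) ≤ 6) (h4 : 4 ≤ G.faceSize (G.faceOf d))
    (hb : 20 ≤ G.faceSize (G.faceOf (G.α d)))
    (hb' : 20 ≤ G.faceSize (G.faceOf (G.α d'))) : False := by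
  have hvphi : G.vertexOf (G.α d) = G.vertexOf (G.φ d) := (vertexOf_phi d).symm
  have hfd : G.faceOf (G.φ d) = G.faceOf d := faceOf_phi d
  have hne1 : G.α d ≠ G.φ d := by
    intro h
    rw [h, hfd] at hb
    omega
  have hdeg1 : G.degree (G.vertexOf (G.α d)) = 3 :=
    deg3_of_big hG hvphi hne1 hb (by rw [hfd]; exact h4)
  have hsad : G.σ (G.α d) = G.φ d := (phi_apply d).symm
  have hpair := deg3_pair hG hdeg1 hb
  rw [hsad] at hpair
  have hf1 : G.finv (G.φ d) ≤ 1/4 := by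
    exact (finv_le_of_ge (m := 4) (by norm_num) (by rw [hfd]; exact h4)).trans (by norm_num)
  have hc1 : 1/5 < G.finv (G.σ (G.φ d)) := by
    unfold finv at hpair hf1 ⊢
    linarith
  have hc1lt : G.faceSize (G.faceOf (G.σ (G.φ d))) < 5 :=
    faceSize_lt_of_finv_gt (by norm_num) hc1
  have hc1ge : 3 ≤ G.faceSize (G.faceOf (G.σ (G.φ d))) := three_le_faceSize hG _
  -- facts at the second endpoint
  have hfd' : G.faceOf d' = G.faceOf d := by rw [← hj, faceOf_phi, faceOf_phi]
  have hfsd' : G.faceOf (G.σ d') = G.faceOf (G.α d') := (faceOf_alpha d').symm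
  have hdeg2 : G.degree (G.vertexOf (G.σ d')) = 3 := by
    apply deg3_of_big hG (vertexOf_sigma d') (sigma_ne hG d')
    · rw [hfsd']; exact hb'
    · rw [hfd']; exact h4
  have hdeg2' : G.degree (G.vertexOf d') = 3 := by rwa [vertexOf_sigma] at hdeg2
  -- y := α (φ d) = σ (σ d')
  have hy : G.α (G.φ d) = G.σ (G.σ d') := by
    rw [alpha_eq_inv_phi (G.φ d), hj, deg3_sigma_inv hdeg2']
  have hfy : G.faceOf (G.α (G.φ d)) = G.faceOf (G.σ (G.φ d)) := faceOf_alpha (G.φ d)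
  have hphiy : G.φ (G.α (G.φ d)) = G.σ (G.φ d) := by
    rw [phi_apply, alpha_alpha]
  have hcase : G.faceSize (G.faceOf (G.σ (G.φ d))) = 3 ∨
      G.faceSize (G.faceOf (G.σ (G.φ d))) = 4 := by omega
  rcases hcase with h3 | hc4
  · -- triangle kill
    have hsz : G.faceSize (G.faceOf (G.α (G.φ d))) = 3 := by rw [hfy, h3]
    have htri : G.φ (G.φ (G.φ (G.α (G.φ d)))) = G.α (G.φ d) := by
      have h := pow_faceSize_fix (G.α (G.φ d))
      rw [hsz, pow3_apply] at h
      exact h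
    -- σ (σ (φ d)) = α d
    have hsp : G.σ (G.σ (G.φ d)) = G.α d := by
      have h := deg3_sigma3 hdeg1
      rw [hsad] at h
      exact h
    -- the triangle's darts: Y := α (φ d) at v2 ; φ Y = σ (φ d) at v1 ; φ² Y at w
    -- z1 := α (σ (φ d)) = α (φ Y) : big face σ, based at w
    have hz1f : G.faceOf (G.α (G.σ (G.φ d))) = G.faceOf (G.α d) := by
      rw [faceOf_alpha (G.σ (G.φ d)), hsp]
    -- φ (σ (φ d)) = φ (φ Y)
    have hz1 : G.α (G.σ (G.φ d)) = G.σ⁻¹ (G.φ (G.σ (G.φ d))) :=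
      alpha_eq_inv_phi (G.σ (G.φ d))
    -- z2 := σ (φ (σ (φ d)))
    have hphiphiY : G.φ (G.φ (G.α (G.φ d))) = G.φ (G.σ (G.φ d)) := by rw [hphiy]
    have hz2f : G.faceOf (G.σ (G.φ (G.σ (G.φ d)))) = G.faceOf (G.α d') := by
      rw [← faceOf_alpha (G.φ (G.σ (G.φ d))), alpha_eq_inv_phi (G.φ (G.σ (G.φ d)))]
      rw [← hphiphiY, htri, hy]
      rw [← hfsd']
      congr 1
      simp
    have hvz : G.vertexOf (G.α (G.σ (G.φ d))) = G.vertexOf (G.σ (G.φ (G.σ (G.φ d)))) := by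
      rw [← vertexOf_phi (G.σ (G.φ d)), vertexOf_sigma]
    have hzne : G.α (G.σ (G.φ d)) ≠ G.σ (G.φ (G.σ (G.φ d))) := by
      intro h
      rw [hz1] at h
      apply sigma_sigma_ne hG (G.φ (G.σ (G.φ d)))
      have h2 := congrArg G.σ h
      rw [Equiv.Perm.coe_inv, Equiv.apply_symm_apply] at h2
      rw [← h2]
    exact two_big hG hvz hzne (by rw [hz1f]; exact hb) (by rw [hz2f]; exact hb')
  · have hf2 : 1/5 < G.finv (G.φ d) := by
      have hle : G.finv (G.σ (G.φ d)) ≤ 1/4 := by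
        simpa using finv_le_of_ge (by norm_num) (le_of_eq hc4.symm)
      linarith
    have hklt : G.faceSize (G.faceOf (G.φ d)) < 5 :=
      faceSize_lt_of_finv_gt (by norm_num) hf2
    rw [hfd] at hklt
    exact core2_square hG hj (by omega) hc4 hb hb'

/-- The one-sided analysis for the `e' = φ³ e` hexagon case: either a
contradiction, or the boundary walk of the big face `σ'` continues from
`σ d'` to `α d` in two or three steps. -/
lemma core3_segment (hG : G.IsPCC) {d d' : G.D}
    (hj : G.φ (G.φ (G.φ d)) = d')
    (h6 : G.faceSize (G.faceOf d) = 6)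
    (hb : 20 ≤ G.faceSize (G.faceOf (G.α d)))
    (hb' : 20 ≤ G.faceSize (G.faceOf (G.α d'))) :
    G.φ (G.φ (G.σ d')) = G.α d ∨ G.φ (G.φ (G.φ (G.σ d'))) = G.α d := by
  -- face bookkeeping
  have hfd1 : G.faceOf (G.φ d) = G.faceOf d := faceOf_phi d
  have hfd2 : G.faceOf (G.φ (G.φ d)) = G.faceOf d := by rw [faceOf_phi, faceOf_phi]
  have hfd' : G.faceOf d' = G.faceOf d := by rw [← hj, faceOf_phi, faceOf_phi, faceOf_phi]
  -- the first endpoint has degree 3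
  have hne1 : G.α d ≠ G.φ d := by
    intro h; rw [h, hfd1, h6] at hb; omega
  have hdeg1 : G.degree (G.vertexOf (G.α d)) = 3 :=
    deg3_of_big hG (vertexOf_phi d).symm hne1 hb (by rw [hfd1, h6]; norm_num)
  have hsad : G.σ (G.α d) = G.φ d := (phi_apply d).symm
  have hs2 : G.σ (G.σ (G.φ d)) = G.α d := by
    have h := deg3_sigma3 hdeg1; rw [hsad] at h; exact h
  -- the face `c1` across the next edge is a triangle
  have hp1 := deg3_pair hG hdeg1 hb
  rw [hsad] at hp1
  have hf6 : G.finv (G.φ d) = 1/6 := finv_eq (by rw [hfd1, h6])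
  have hc1 : G.faceSize (G.faceOf (G.σ (G.φ d))) = 3 := by
    have hlt : G.faceSize (G.faceOf (G.σ (G.φ d))) < 4 :=
      faceSize_lt_of_finv_gt (by norm_num) (by rw [hf6] at hp1; linarith)
    have := three_le_faceSize hG (G.σ (G.φ d))
    omega
  -- Y1 := α (φ d)
  have hY1f : G.faceOf (G.α (G.φ d)) = G.faceOf (G.σ (G.φ d)) := faceOf_alpha (G.φ d)
  have hY1sz : G.faceSize (G.faceOf (G.α (G.φ d))) = 3 := by rw [hY1f]; exact hc1
  have htri1 : G.φ (G.φ (G.φ (G.α (G.φ d)))) = G.α (G.φ d) := by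
    have h := pow_faceSize_fix (G.α (G.φ d)); rw [hY1sz, pow3_apply] at h; exact h
  have hσY1 : G.σ (G.α (G.φ d)) = G.φ (G.φ d) := (phi_apply (G.φ d)).symm
  have hY1inv : G.α (G.φ d) = G.σ⁻¹ (G.φ (G.φ d)) := by rw [← hσY1]; simp
  have hφY1 : G.φ (G.α (G.φ d)) = G.σ (G.φ d) := phi_alpha (G.φ d)
  -- z1 := α (σ (φ d))
  have hz1f : G.faceOf (G.α (G.σ (G.φ d))) = G.faceOf (G.α d) := by
    rw [faceOf_alpha (G.σ (G.φ d)), hs2]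
  have hz1step : G.φ (G.α (G.σ (G.φ d))) = G.α d := by
    rw [phi_alpha, hs2]
  have hz1inv : G.α (G.σ (G.φ d)) = G.σ⁻¹ (G.φ (G.φ (G.α (G.φ d)))) := by
    rw [hφY1]; exact alpha_eq_inv_phi (G.σ (G.φ d))
  have hz1v : G.vertexOf (G.α (G.σ (G.φ d))) = G.vertexOf (G.φ (G.φ (G.α (G.φ d)))) := by
    rw [← hφY1, ← vertexOf_phi]
  -- second endpoint
  have hfsd' : G.faceOf (G.σ d') = G.faceOf (G.α d') := (faceOf_alpha d').symm
  have hdeg3σ : G.degree (G.vertexOf (G.σ d')) = 3 :=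
    deg3_of_big hG (vertexOf_sigma d') (sigma_ne hG d') (by rw [hfsd']; exact hb')
      (by rw [hfd', h6]; norm_num)
  have hdeg3 : G.degree (G.vertexOf d') = 3 := by rwa [vertexOf_sigma] at hdeg3σ
  have hs3' : G.σ (G.σ (G.σ d')) = d' := deg3_sigma3 hdeg3
  have hp3 := deg3_pair hG hdeg3σ (by rw [hfsd']; exact hb')
  rw [hs3'] at hp3
  have hfd'6 : G.finv d' = 1/6 := finv_eq (by rw [hfd', h6])
  have hc3 : G.faceSize (G.faceOf (G.σ (G.σ d'))) = 3 := by
    have hlt : G.faceSize (G.faceOf (G.σ (G.σ d'))) < 4 :=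
      faceSize_lt_of_finv_gt (by norm_num) (by rw [hfd'6] at hp3; linarith)
    have := three_le_faceSize hG (G.σ (G.σ d'))
    omega
  -- Y3 := α (φ (φ d)) = σ (σ d')
  have hY3 : G.α (G.φ (G.φ d)) = G.σ (G.σ d') := by
    rw [alpha_eq_inv_phi (G.φ (G.φ d)), hj, deg3_sigma_inv hdeg3]
  have hY3sz : G.faceSize (G.faceOf (G.α (G.φ (G.φ d)))) = 3 := by rw [hY3]; exact hc3
  have htri3 : G.φ (G.φ (G.φ (G.α (G.φ (G.φ d))))) = G.α (G.φ (G.φ d)) := by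
    have h := pow_faceSize_fix (G.α (G.φ (G.φ d))); rw [hY3sz, pow3_apply] at h; exact h
  have hφY3 : G.φ (G.α (G.φ (G.φ d))) = G.σ (G.φ (G.φ d)) := phi_alpha (G.φ (G.φ d))
  have hαφ2Y3 : G.α (G.φ (G.φ (G.α (G.φ (G.φ d))))) = G.σ d' := by
    rw [alpha_eq_inv_phi, htri3, hY3]
    simp
  have hz3step : G.φ (G.σ d') = G.σ (G.φ (G.φ (G.α (G.φ (G.φ d))))) := by
    rw [phi_apply (G.σ d')]
    congr 1
    rw [← hαφ2Y3, alpha_alpha]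
  have hz3f : G.faceOf (G.σ (G.φ (G.φ (G.α (G.φ (G.φ d)))))) = G.faceOf (G.α d') := by
    rw [← faceOf_alpha, hαφ2Y3, hfsd']
  have hz3v : G.vertexOf (G.σ (G.φ (G.φ (G.α (G.φ (G.φ d)))))) =
      G.vertexOf (G.φ (G.φ (G.α (G.φ (G.φ d))))) := vertexOf_sigma _
  -- the middle vertex has degree 3 or 4
  have hY1v : G.vertexOf (G.α (G.φ d)) = G.vertexOf (G.φ (G.φ d)) := (vertexOf_phi (G.φ d)).symm
  have hφY3v : G.vertexOf (G.φ (G.α (G.φ (G.φ d)))) = G.vertexOf (G.φ (G.φ d)) := by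
    rw [hφY3]; exact vertexOf_sigma _
  have hd1 : G.φ (G.φ d) ≠ G.α (G.φ d) := by
    intro h
    exact sigma_ne hG (G.α (G.φ d)) (by rw [hσY1, h])
  have hd2 : G.φ (G.φ d) ≠ G.φ (G.α (G.φ (G.φ d))) := by
    rw [hφY3]
    intro h
    exact sigma_ne hG (G.φ (G.φ d)) h.symm
  have hd3 : G.α (G.φ d) ≠ G.φ (G.α (G.φ (G.φ d))) := by
    rw [hφY3]
    intro h
    apply sigma_sigma_ne hG (G.φ (G.φ d))
    rw [← h, hσY1]
  have hm34 : G.degree (G.vertexOf (G.φ (G.φ d))) = 3 ∨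
      G.degree (G.vertexOf (G.φ (G.φ d))) = 4 := by
    have hq := curv_ineq₃ hG (d1 := G.φ (G.φ d)) (d2 := G.α (G.φ d))
      (d3 := G.φ (G.α (G.φ (G.φ d)))) hY1v.symm hφY3v.symm hd1 hd2 hd3
    have hv1 : G.finv (G.φ (G.φ d)) = 1/6 := finv_eq (by rw [hfd2, h6])
    have hv2 : G.finv (G.α (G.φ d)) = 1/3 := finv_eq hY1sz
    have hv3 : G.finv (G.φ (G.α (G.φ (G.φ d)))) = 1/3 :=
      finv_eq (by rw [faceOf_phi]; exact hY3sz)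
    rw [hv1, hv2, hv3] at hq
    have hge := hG.deg3 (G.vertexOf (G.φ (G.φ d)))
    have hlt : ((G.degree (G.vertexOf (G.φ (G.φ d)))) : ℚ) < 5 := by linarith
    have : G.degree (G.vertexOf (G.φ (G.φ d))) < 5 := by exact_mod_cast hlt
    omega
  rcases hm34 with hm3 | hm4
  · -- middle vertex of degree 3
    have hαφ2Y1 : G.α (G.φ (G.φ (G.α (G.φ d)))) = G.φ (G.α (G.φ (G.φ d))) := by
      rw [alpha_eq_inv_phi, htri1, hY1inv, deg3_sigma_inv2 hm3, hφY3]
    have hB3 : G.φ (G.φ (G.α (G.φ d))) = G.α (G.φ (G.α (G.φ (G.φ d)))) := by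
      rw [← hαφ2Y1, alpha_alpha]
    have hw13 : G.vertexOf (G.φ (G.φ (G.α (G.φ d)))) =
        G.vertexOf (G.φ (G.φ (G.α (G.φ (G.φ d))))) := by
      rw [hB3, ← vertexOf_phi]
    have hv13 : G.vertexOf (G.α (G.σ (G.φ d))) =
        G.vertexOf (G.σ (G.φ (G.φ (G.α (G.φ (G.φ d)))))) := by
      rw [hz1v, hw13, hz3v]
    rcases eq_or_ne (G.α (G.σ (G.φ d))) (G.σ (G.φ (G.φ (G.α (G.φ (G.φ d)))))) with heq | hne
    · left
      rw [hz3step, ← heq]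
      exact hz1step
    · exact absurd (two_big hG hv13 hne (by rw [hz1f]; exact hb) (by rw [hz3f]; exact hb'))
        (by simp)
  · -- middle vertex of degree 4
    have hσ3Y1 : G.σ (G.σ (G.σ (G.φ (G.φ d)))) = (G.α (G.φ d)) := by
      rw [hY1inv, deg4_sigma_inv hm4]
    have hαφ2Y1 : G.α (G.φ (G.φ (G.α (G.φ d)))) = (G.σ (G.σ (G.φ (G.φ d)))) := by
      rw [alpha_eq_inv_phi, htri1, hY1inv, deg4_sigma_inv2 hm4]
    have hαX2 : G.α (G.σ (G.σ (G.φ (G.φ d)))) = (G.φ (G.φ (G.α (G.φ d)))) := by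
      rw [← hαφ2Y1, alpha_alpha]
    have hφX2 : G.φ (G.σ (G.σ (G.φ (G.φ d)))) = (G.σ (G.φ (G.φ (G.α (G.φ d))))) := by
      rw [phi_apply, hαX2]
    have hφA0 : G.φ (G.α (G.σ (G.φ (G.φ d)))) = (G.σ (G.σ (G.φ (G.φ d)))) := phi_alpha (G.σ (G.φ (G.φ d)))
    have hA0f : G.faceOf (G.α (G.σ (G.φ (G.φ d)))) = G.faceOf (G.σ (G.σ (G.φ (G.φ d)))) := faceOf_alpha (G.σ (G.φ (G.φ d)))
    have hA0v : G.vertexOf (G.α (G.σ (G.φ (G.φ d)))) = G.vertexOf (G.φ (G.φ (G.α (G.φ (G.φ d))))) := by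
      rw [← vertexOf_phi, ← hφY3]
    have hA0inv : (G.α (G.σ (G.φ (G.φ d)))) = G.σ⁻¹ (G.φ (G.φ (G.α (G.φ (G.φ d))))) := by
      rw [alpha_eq_inv_phi, ← hφY3]
    have hsφ2df : G.finv (G.σ (G.φ (G.φ d))) = 1/3 := finv_eq (by rw [← faceOf_alpha]; exact hY3sz)
    have hq4 := deg4_curv hG hm4
    rw [hσ3Y1] at hq4
    have hv1 : G.finv (G.φ (G.φ d)) = 1/6 := finv_eq (by rw [hfd2, h6])
    have hv2 : G.finv (G.α (G.φ d)) = 1/3 := finv_eq hY1sz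
    rw [hv1, hv2, hsφ2df] at hq4
    have hx2big : 1/6 < G.finv (G.σ (G.σ (G.φ (G.φ d)))) := by linarith
    have hx2lt : G.faceSize (G.faceOf (G.σ (G.σ (G.φ (G.φ d))))) < 6 :=
      faceSize_lt_of_finv_gt (by norm_num) hx2big
    have hx2ge : 3 ≤ G.faceSize (G.faceOf (G.σ (G.σ (G.φ (G.φ d))))) := three_le_faceSize hG _
    have hP1f : G.faceOf (G.σ (G.φ (G.φ (G.α (G.φ d))))) = G.faceOf (G.σ (G.σ (G.φ (G.φ d)))) := by rw [← hφX2, faceOf_phi]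
    have hP1v : G.vertexOf (G.σ (G.φ (G.φ (G.α (G.φ d))))) = G.vertexOf (G.φ (G.φ (G.α (G.φ d)))) := vertexOf_sigma _
    have hσz1 : G.σ (G.α (G.σ (G.φ d))) = (G.φ (G.φ (G.α (G.φ d)))) := by rw [hz1inv]; simp
    have hz1ne_phi2Y1 : (G.α (G.σ (G.φ d))) ≠ (G.φ (G.φ (G.α (G.φ d)))) := by
      intro h
      exact sigma_ne hG (G.α (G.σ (G.φ d))) (by rw [hσz1, ← h])
    have hz1neP1 : (G.α (G.σ (G.φ d))) ≠ (G.σ (G.φ (G.φ (G.α (G.φ d))))) := by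
      intro h
      apply sigma_sigma_ne hG (G.φ (G.φ (G.α (G.φ d))))
      rw [← h]
      exact hσz1
    have hphi2Y1f : G.faceSize (G.faceOf (G.φ (G.φ (G.α (G.φ d))))) = 3 := by
      rw [faceOf_phi, faceOf_phi]; exact hY1sz
    have hz3A0ne : (G.σ (G.φ (G.φ (G.α (G.φ (G.φ d)))))) ≠ (G.α (G.σ (G.φ (G.φ d)))) := by
      intro h
      apply sigma_sigma_ne hG (G.φ (G.φ (G.α (G.φ (G.φ d)))))
      have h2 := congrArg G.σ h
      rw [hA0inv] at h2
      simp only [Equiv.Perm.coe_inv, Equiv.apply_symm_apply] at h2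
      exact h2
    have hphi2Y3f : G.faceSize (G.faceOf (G.φ (G.φ (G.α (G.φ (G.φ d)))))) = 3 := by
      rw [faceOf_phi, faceOf_phi]; exact hY3sz
    -- cases on the size of the face x2
    have hx2cases : G.faceSize (G.faceOf (G.σ (G.σ (G.φ (G.φ d))))) = 3 ∨ G.faceSize (G.faceOf (G.σ (G.σ (G.φ (G.φ d))))) = 4 ∨
        G.faceSize (G.faceOf (G.σ (G.σ (G.φ (G.φ d))))) = 5 := by omega
    rcases hx2cases with hx3 | hx4 | hx5
    · -- x2 is a triangle
      have hA0sz : G.faceSize (G.faceOf (G.α (G.σ (G.φ (G.φ d))))) = 3 := by rw [hA0f]; exact hx3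
      have htriA : G.φ (G.φ (G.φ (G.α (G.σ (G.φ (G.φ d)))))) = (G.α (G.σ (G.φ (G.φ d)))) := by
        have h := pow_faceSize_fix (G.α (G.σ (G.φ (G.φ d)))); rw [hA0sz, pow3_apply] at h; exact h
      have hφP1A0 : G.φ (G.σ (G.φ (G.φ (G.α (G.φ d))))) = (G.α (G.σ (G.φ (G.φ d)))) := by
        rw [hφA0, hφX2] at htriA; exact htriA
      -- the degree of the w1-vertex is 3 or 4
      have hP1f3 : G.faceSize (G.faceOf (G.σ (G.φ (G.φ (G.α (G.φ d)))))) = 3 := by rw [hP1f]; exact hx3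
      have hw1deg : G.degree (G.vertexOf (G.α (G.σ (G.φ d)))) = 3 ∨ G.degree (G.vertexOf (G.α (G.σ (G.φ d)))) = 4 := by
        have hq := curv_ineq₃ hG (d1 := (G.α (G.σ (G.φ d)))) (d2 := (G.φ (G.φ (G.α (G.φ d))))) (d3 := (G.σ (G.φ (G.φ (G.α (G.φ d))))))
          hz1v (hz1v.trans hP1v.symm) hz1ne_phi2Y1 hz1neP1
          (fun h => sigma_ne hG (G.φ (G.φ (G.α (G.φ d)))) h.symm)
        have hu1 : G.finv (G.α (G.σ (G.φ d))) ≤ 1/20 := by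
          exact (finv_le_of_ge (m := 20) (by norm_num) (by rw [hz1f]; exact hb)).trans (by norm_num)
        have hu2 : G.finv (G.φ (G.φ (G.α (G.φ d)))) = 1/3 := finv_eq hphi2Y1f
        have hu3 : G.finv (G.σ (G.φ (G.φ (G.α (G.φ d))))) = 1/3 := finv_eq hP1f3
        rw [hu2, hu3] at hq
        have hge := hG.deg3 (G.vertexOf (G.α (G.σ (G.φ d))))
        have hlt : ((G.degree (G.vertexOf (G.α (G.σ (G.φ d))))) : ℚ) < 5 := by linarith
        have : G.degree (G.vertexOf (G.α (G.σ (G.φ d)))) < 5 := by exact_mod_cast hlt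
        omega
      rcases hw1deg with hdw1 | hdw1
      · -- w1 has degree 3
        have hσP1 : G.σ (G.σ (G.φ (G.φ (G.α (G.φ d))))) = (G.α (G.σ (G.φ d))) := by
          rw [show (G.σ (G.φ (G.φ (G.α (G.φ d))))) = G.σ (G.σ (G.α (G.σ (G.φ d)))) from by rw [hσz1]]
          exact deg3_sigma3 hdw1
        have hαP1f : G.faceOf (G.α (G.σ (G.φ (G.φ (G.α (G.φ d)))))) = G.faceOf (G.α d) := by
          rw [faceOf_alpha, hσP1, hz1f]
        have hαP1v : G.vertexOf (G.α (G.σ (G.φ (G.φ (G.α (G.φ d)))))) = G.vertexOf (G.φ (G.φ (G.α (G.φ (G.φ d))))) := by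
          rw [← vertexOf_phi, hφP1A0, hA0v]
        rcases eq_or_ne (G.α (G.σ (G.φ (G.φ (G.α (G.φ d)))))) (G.σ (G.φ (G.φ (G.α (G.φ (G.φ d)))))) with heq | hne
        · right
          rw [hz3step, ← heq, phi_alpha, hσP1]
          exact hz1step
        · exact absurd (two_big hG (hαP1v.trans hz3v.symm) hne
            (by rw [hαP1f]; exact hb) (by rw [hz3f]; exact hb')) (by simp)
      · -- w1 has degree 4
        have hP1z1 : G.σ (G.σ (G.α (G.σ (G.φ d)))) = (G.σ (G.φ (G.φ (G.α (G.φ d))))) := by rw [hσz1]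
        have hσWd : G.σ (G.σ (G.σ (G.φ (G.φ (G.α (G.φ d)))))) = (G.α (G.σ (G.φ d))) := by
          rw [← hP1z1]
          exact deg4_sigma4 hdw1
        have hq4' := deg4_curv hG hdw1
        rw [hσz1] at hq4'
        have hu1 : G.finv (G.α (G.σ (G.φ d))) ≤ 1/20 := by
          exact (finv_le_of_ge (m := 20) (by norm_num) (by rw [hz1f]; exact hb)).trans (by norm_num)
        have hu2 : G.finv (G.φ (G.φ (G.α (G.φ d)))) = 1/3 := finv_eq hphi2Y1f
        have hu3 : G.finv (G.σ (G.φ (G.φ (G.α (G.φ d))))) = 1/3 := finv_eq hP1f3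
        rw [hu2, hu3] at hq4'
        have hWbig : 1/((4:ℕ):ℚ) < G.finv (G.σ (G.σ (G.φ (G.φ (G.α (G.φ d)))))) := by
          push_cast
          linarith
        have hWsz : G.faceSize (G.faceOf (G.σ (G.σ (G.φ (G.φ (G.α (G.φ d))))))) = 3 := by
          have hlt := faceSize_lt_of_finv_gt (by norm_num) hWbig
          have := three_le_faceSize hG (G.σ (G.σ (G.φ (G.φ (G.α (G.φ d))))))
          omega
        have hαP1f : G.faceOf (G.α (G.σ (G.φ (G.φ (G.α (G.φ d)))))) = G.faceOf (G.σ (G.σ (G.φ (G.φ (G.α (G.φ d)))))) := faceOf_alpha (G.σ (G.φ (G.φ (G.α (G.φ d)))))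
        have hαP1v : G.vertexOf (G.α (G.σ (G.φ (G.φ (G.α (G.φ d)))))) = G.vertexOf (G.φ (G.φ (G.α (G.φ (G.φ d))))) := by
          rw [← vertexOf_phi, hφP1A0, hA0v]
        -- degree of the w3-vertex
        have hw3deg : G.degree (G.vertexOf (G.φ (G.φ (G.α (G.φ (G.φ d)))))) = 3 ∨
            G.degree (G.vertexOf (G.φ (G.φ (G.α (G.φ (G.φ d)))))) = 4 := by
          have hvz3 : G.vertexOf (G.σ (G.φ (G.φ (G.α (G.φ (G.φ d)))))) = G.vertexOf (G.φ (G.φ (G.α (G.φ (G.φ d))))) := vertexOf_sigma _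
          have hvA0 : G.vertexOf (G.σ (G.φ (G.φ (G.α (G.φ (G.φ d)))))) = G.vertexOf (G.α (G.σ (G.φ (G.φ d)))) := by rw [hvz3, hA0v]
          have hq := curv_ineq₃ hG (d1 := (G.σ (G.φ (G.φ (G.α (G.φ (G.φ d))))))) (d2 := (G.φ (G.φ (G.α (G.φ (G.φ d)))))) (d3 := (G.α (G.σ (G.φ (G.φ d)))))
            hvz3 hvA0 (fun h => sigma_ne hG (G.φ (G.φ (G.α (G.φ (G.φ d))))) h) hz3A0ne
            (by intro h
                apply sigma_ne hG (G.φ (G.φ (G.α (G.φ (G.φ d)))))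
                rw [hA0inv] at h
                conv_lhs => rw [h]
                simp)
          have hu1 : G.finv (G.σ (G.φ (G.φ (G.α (G.φ (G.φ d)))))) ≤ 1/20 := by
            exact (finv_le_of_ge (m := 20) (by norm_num) (by rw [hz3f]; exact hb')).trans (by norm_num)
          have hu2 : G.finv (G.φ (G.φ (G.α (G.φ (G.φ d))))) = 1/3 := finv_eq hphi2Y3f
          have hu3 : G.finv (G.α (G.σ (G.φ (G.φ d)))) = 1/3 := finv_eq (by rw [hA0f]; exact hx3)
          rw [hu2, hu3] at hq
          have hge := hG.deg3 (G.vertexOf (G.σ (G.φ (G.φ (G.α (G.φ (G.φ d)))))))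
          rw [show G.vertexOf (G.σ (G.φ (G.φ (G.α (G.φ (G.φ d)))))) = G.vertexOf (G.φ (G.φ (G.α (G.φ (G.φ d))))) from vertexOf_sigma _] at hq hge
          have hlt : ((G.degree (G.vertexOf (G.φ (G.φ (G.α (G.φ (G.φ d))))))) : ℚ) < 5 := by linarith
          have : G.degree (G.vertexOf (G.φ (G.φ (G.α (G.φ (G.φ d)))))) < 5 := by exact_mod_cast hlt
          omega
        have hαP1ne1 : G.α (G.σ (G.φ (G.φ (G.α (G.φ d))))) ≠ (G.φ (G.φ (G.α (G.φ (G.φ d))))) := by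
          intro h
          have h2 : (G.σ (G.φ (G.φ (G.α (G.φ d))))) = G.σ d' := by
            rw [← hαφ2Y3, ← h, alpha_alpha]
          have h3 : G.faceSize (G.faceOf (G.σ (G.φ (G.φ (G.α (G.φ d)))))) =
              G.faceSize (G.faceOf (G.σ d')) := by rw [h2]
          rw [hP1f3, hfsd'] at h3
          omega
        rcases hw3deg with hdw3 | hdw3
        · -- w3 of degree 3 : impossible
          exfalso
          have hA0eq : (G.α (G.σ (G.φ (G.φ d)))) = G.σ (G.σ (G.φ (G.φ (G.α (G.φ (G.φ d)))))) := by
            rw [hA0inv, deg3_sigma_inv hdw3]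
          rcases deg3_mem hG hdw3 hαP1v with h | h | h
          · exact hαP1ne1 h
          · have h3 : G.faceSize (G.faceOf (G.α (G.σ (G.φ (G.φ (G.α (G.φ d))))))) = G.faceSize (G.faceOf (G.σ (G.φ (G.φ (G.α (G.φ (G.φ d))))))) := by
              rw [h]
            rw [hαP1f, hWsz, hz3f] at h3
            omega
          · rw [← hA0eq] at h
            have h2 := congrArg G.α h
            rw [alpha_alpha, alpha_alpha] at h2
            have hv : G.vertexOf (G.σ (G.φ (G.φ (G.α (G.φ d))))) = G.vertexOf (G.σ (G.φ (G.φ d))) := by rw [h2]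
            rw [hP1v, vertexOf_sigma] at hv
            rw [← hY1v] at hv
            exact phi2_vertex_ne hG (G.α (G.φ d)) hv
        · -- w3 of degree 4
          have hA0eq4 : (G.α (G.σ (G.φ (G.φ d)))) = G.σ (G.σ (G.σ (G.φ (G.φ (G.α (G.φ (G.φ d))))))) := by
            rw [hA0inv, deg4_sigma_inv hdw3]
          have hV3 : G.α (G.σ (G.φ (G.φ (G.α (G.φ d))))) = G.σ (G.σ (G.φ (G.φ (G.α (G.φ (G.φ d)))))) := by
            rcases deg4_mem hG hdw3 hαP1v with h | h | h | h
            · exact absurd h hαP1ne1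
            · exfalso
              have h3 : G.faceSize (G.faceOf (G.α (G.σ (G.φ (G.φ (G.α (G.φ d))))))) = G.faceSize (G.faceOf (G.σ (G.φ (G.φ (G.α (G.φ (G.φ d))))))) := by
                rw [h]
              rw [hαP1f, hWsz, hz3f] at h3
              omega
            · exact h
            · exfalso
              rw [← hA0eq4] at h
              have h2 := congrArg G.α h
              rw [alpha_alpha, alpha_alpha] at h2
              have hv : G.vertexOf (G.σ (G.φ (G.φ (G.α (G.φ d))))) = G.vertexOf (G.σ (G.φ (G.φ d))) := by rw [h2]
              rw [hP1v, vertexOf_sigma] at hv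
              rw [← hY1v] at hv
              exact phi2_vertex_ne hG (G.α (G.φ d)) hv
          have htriW : G.φ (G.φ (G.φ (G.σ (G.σ (G.φ (G.φ (G.α (G.φ d)))))))) = (G.σ (G.σ (G.φ (G.φ (G.α (G.φ d)))))) := by
            have h := pow_faceSize_fix (G.σ (G.σ (G.φ (G.φ (G.α (G.φ d)))))); rw [hWsz, pow3_apply] at h; exact h
          have hφαP1 : G.φ (G.α (G.σ (G.φ (G.φ (G.α (G.φ d)))))) = (G.σ (G.σ (G.φ (G.φ (G.α (G.φ d)))))) := phi_alpha (G.σ (G.φ (G.φ (G.α (G.φ d)))))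
          have h1pin : G.φ (G.σ (G.σ (G.φ (G.φ (G.α (G.φ (G.φ d))))))) = (G.σ (G.σ (G.φ (G.φ (G.α (G.φ d)))))) := by rw [← hV3, hφαP1]
          have hpin : G.φ (G.φ (G.σ (G.σ (G.φ (G.φ (G.α (G.φ d))))))) = G.σ (G.σ (G.φ (G.φ (G.α (G.φ (G.φ d)))))) := by
            apply Equiv.injective G.φ
            rw [htriW, h1pin]
          have hαz3f : G.faceOf (G.α (G.σ (G.φ (G.φ (G.α (G.φ (G.φ d))))))) = G.faceOf (G.σ (G.σ (G.φ (G.φ (G.α (G.φ d)))))) := by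
            rw [faceOf_alpha (G.σ (G.φ (G.φ (G.α (G.φ (G.φ d)))))), ← hV3, hαP1f]
          rcases face3_mem hG hWsz hαz3f with h | h | h
          · -- the walk closes up : segment of length 3
            right
            have hz3' : (G.σ (G.φ (G.φ (G.α (G.φ (G.φ d)))))) = G.α (G.σ (G.σ (G.φ (G.φ (G.α (G.φ d)))))) := by rw [← h, alpha_alpha]
            rw [hz3step, hz3', phi_alpha, hσWd]
            exact hz1step
          · -- two big faces meet at the apex of the W-triangle
            exfalso
            have hαM : G.α (G.φ (G.σ (G.σ (G.φ (G.φ (G.α (G.φ d))))))) = (G.σ (G.φ (G.φ (G.α (G.φ (G.φ d)))))) := by rw [← h, alpha_alpha]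
            have hb1f : G.faceOf (G.α (G.σ (G.σ (G.φ (G.φ (G.α (G.φ d))))))) = G.faceOf (G.α d) := by
              rw [faceOf_alpha (G.σ (G.σ (G.φ (G.φ (G.α (G.φ d)))))), hσWd, hz1f]
            have hb1v : G.vertexOf (G.α (G.σ (G.σ (G.φ (G.φ (G.α (G.φ d))))))) = G.vertexOf (G.φ (G.σ (G.σ (G.φ (G.φ (G.α (G.φ d))))))) := (vertexOf_phi _).symm
            have hb2f : G.faceOf (G.σ (G.φ (G.σ (G.σ (G.φ (G.φ (G.α (G.φ d)))))))) = G.faceOf (G.α d') := by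
              rw [← faceOf_alpha (G.φ (G.σ (G.σ (G.φ (G.φ (G.α (G.φ d))))))), hαM, hz3f]
            have hbne : G.α (G.σ (G.σ (G.φ (G.φ (G.α (G.φ d)))))) ≠ G.σ (G.φ (G.σ (G.σ (G.φ (G.φ (G.α (G.φ d))))))) := by
              intro hx
              apply sigma_sigma_ne hG (G.φ (G.σ (G.σ (G.φ (G.φ (G.α (G.φ d)))))))
              have h2 := congrArg G.σ hx
              rw [alpha_eq_inv_phi (G.σ (G.σ (G.φ (G.φ (G.α (G.φ d))))))] at h2
              simp only [Equiv.Perm.coe_inv, Equiv.apply_symm_apply] at h2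
              rw [← h2]
            exact two_big hG (hb1v.trans (vertexOf_sigma _).symm) hbne
              (by rw [hb1f]; exact hb) (by rw [hb2f]; exact hb')
          · -- `z3 = P1` : impossible by face sizes
            exfalso
            rw [hpin, ← hV3] at h
            have h2 := congrArg G.α h
            rw [alpha_alpha, alpha_alpha] at h2
            have h3 : G.faceSize (G.faceOf (G.σ (G.φ (G.φ (G.α (G.φ (G.φ d))))))) = G.faceSize (G.faceOf (G.σ (G.φ (G.φ (G.α (G.φ d)))))) := by rw [h2]
            rw [hz3f, hP1f3] at h3
            omega
    · -- x2 is a square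
      exfalso
      have hA0sz : 4 ≤ G.faceSize (G.faceOf (G.α (G.σ (G.φ (G.φ d))))) := by rw [hA0f, hx4]
      have hsq := pow_faceSize_fix (G.α (G.σ (G.φ (G.φ d))))
      rw [show G.faceSize (G.faceOf (G.α (G.σ (G.φ (G.φ d))))) = 4 from by rw [hA0f]; exact hx4,
        pow4_apply, hφA0, hφX2] at hsq
      have hdw3 : G.degree (G.vertexOf (G.φ (G.φ (G.α (G.φ (G.φ d)))))) = 3 := by
        have h := deg3_of_big hG (hz3v.trans hA0v.symm) hz3A0ne
          (by rw [hz3f]; exact hb') hA0sz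
        rwa [hz3v] at h
      have hA0eq : (G.α (G.σ (G.φ (G.φ d)))) = G.σ (G.σ (G.φ (G.φ (G.α (G.φ (G.φ d)))))) := by
        rw [hA0inv, deg3_sigma_inv hdw3]
      have hdw1 : G.degree (G.vertexOf (G.α (G.σ (G.φ d)))) = 3 :=
        deg3_of_big hG (hz1v.trans hP1v.symm) hz1neP1 (by rw [hz1f]; exact hb)
          (by rw [hP1f]; omega)
      have hσP1 : G.σ (G.σ (G.φ (G.φ (G.α (G.φ d))))) = (G.α (G.σ (G.φ d))) := by
        rw [show (G.σ (G.φ (G.φ (G.α (G.φ d))))) = G.σ (G.σ (G.α (G.σ (G.φ d)))) from by rw [hσz1]]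
        exact deg3_sigma3 hdw1
      have hαP1f : G.faceOf (G.α (G.σ (G.φ (G.φ (G.α (G.φ d)))))) = G.faceOf (G.α d) := by
        rw [faceOf_alpha, hσP1, hz1f]
      have hαP1v : G.vertexOf (G.α (G.σ (G.φ (G.φ (G.α (G.φ d)))))) = G.vertexOf (G.φ (G.σ (G.φ (G.φ (G.α (G.φ d)))))) := (vertexOf_phi _).symm
      have hαQv : G.vertexOf (G.α (G.φ (G.σ (G.φ (G.φ (G.α (G.φ d))))))) = G.vertexOf (G.φ (G.φ (G.α (G.φ (G.φ d))))) := by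
        rw [← vertexOf_phi, hsq, hA0v]
      rcases deg3_mem hG hdw3 hαQv with h | h | h
      · have h2 : (G.φ (G.σ (G.φ (G.φ (G.α (G.φ d)))))) = G.σ d' := by rw [← hαφ2Y3, ← h, alpha_alpha]
        have h3 : G.faceSize (G.faceOf (G.φ (G.σ (G.φ (G.φ (G.α (G.φ d))))))) = G.faceSize (G.faceOf (G.σ d')) := by rw [h2]
        rw [faceOf_phi, hP1f, hx4, hfsd'] at h3
        omega
      · have hσQf : G.faceOf (G.σ (G.φ (G.σ (G.φ (G.φ (G.α (G.φ d))))))) = G.faceOf (G.α d') := by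
          rw [← faceOf_alpha (G.φ (G.σ (G.φ (G.φ (G.α (G.φ d)))))), h, hz3f]
        have hbne : G.α (G.σ (G.φ (G.φ (G.α (G.φ d))))) ≠ G.σ (G.φ (G.σ (G.φ (G.φ (G.α (G.φ d)))))) := by
          intro hx
          apply sigma_sigma_ne hG (G.φ (G.σ (G.φ (G.φ (G.α (G.φ d))))))
          have h2 := congrArg G.σ hx
          rw [alpha_eq_inv_phi (G.σ (G.φ (G.φ (G.α (G.φ d)))))] at h2
          simp only [Equiv.Perm.coe_inv, Equiv.apply_symm_apply] at h2
          rw [← h2]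
        exact two_big hG (hαP1v.trans (vertexOf_sigma _).symm) hbne
          (by rw [hαP1f]; exact hb) (by rw [hσQf]; exact hb')
      · rw [← hA0eq] at h
        have h2 := congrArg G.α h
        rw [alpha_alpha, alpha_alpha] at h2
        have h3 : G.faceSize (G.faceOf (G.φ (G.σ (G.φ (G.φ (G.α (G.φ d))))))) = G.faceSize (G.faceOf (G.σ (G.φ (G.φ d)))) := by rw [h2]
        rw [faceOf_phi, hP1f, hx4, ← faceOf_alpha, hY3sz] at h3
        omega
    · -- x2 is a pentagon
      exfalso
      have hA0sz : 4 ≤ G.faceSize (G.faceOf (G.α (G.σ (G.φ (G.φ d))))) := by rw [hA0f, hx5]; norm_num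
      have hpent := pow_faceSize_fix (G.α (G.σ (G.φ (G.φ d))))
      rw [show G.faceSize (G.faceOf (G.α (G.σ (G.φ (G.φ d))))) = 5 from by rw [hA0f]; exact hx5,
        pow5_apply, hφA0, hφX2] at hpent
      have hdw3 : G.degree (G.vertexOf (G.φ (G.φ (G.α (G.φ (G.φ d)))))) = 3 := by
        have h := deg3_of_big hG (hz3v.trans hA0v.symm) hz3A0ne
          (by rw [hz3f]; exact hb') hA0sz
        rwa [hz3v] at h
      have hA0eq : (G.α (G.σ (G.φ (G.φ d)))) = G.σ (G.σ (G.φ (G.φ (G.α (G.φ (G.φ d)))))) := by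
        rw [hA0inv, deg3_sigma_inv hdw3]
      have hdw1 : G.degree (G.vertexOf (G.α (G.σ (G.φ d)))) = 3 :=
        deg3_of_big hG (hz1v.trans hP1v.symm) hz1neP1 (by rw [hz1f]; exact hb)
          (by rw [hP1f]; omega)
      have hσP1 : G.σ (G.σ (G.φ (G.φ (G.α (G.φ d))))) = (G.α (G.σ (G.φ d))) := by
        rw [show (G.σ (G.φ (G.φ (G.α (G.φ d))))) = G.σ (G.σ (G.α (G.σ (G.φ d)))) from by rw [hσz1]]
        exact deg3_sigma3 hdw1
      have hαP1f : G.faceOf (G.α (G.σ (G.φ (G.φ (G.α (G.φ d)))))) = G.faceOf (G.α d) := by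
        rw [faceOf_alpha, hσP1, hz1f]
      have hαP1v : G.vertexOf (G.α (G.σ (G.φ (G.φ (G.α (G.φ d)))))) = G.vertexOf (G.φ (G.σ (G.φ (G.φ (G.α (G.φ d)))))) := (vertexOf_phi _).symm
      have hbinv : G.α (G.σ (G.φ (G.φ (G.α (G.φ d))))) = G.σ⁻¹ (G.φ (G.σ (G.φ (G.φ (G.α (G.φ d)))))) := alpha_eq_inv_phi (G.σ (G.φ (G.φ (G.α (G.φ d)))))
      have hσb : G.σ (G.α (G.σ (G.φ (G.φ (G.α (G.φ d)))))) = (G.φ (G.σ (G.φ (G.φ (G.α (G.φ d)))))) := by rw [hbinv]; simp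
      have hQf : G.faceSize (G.faceOf (G.φ (G.σ (G.φ (G.φ (G.α (G.φ d))))))) = 5 := by rw [faceOf_phi, hP1f]; exact hx5
      have hdq : G.degree (G.vertexOf (G.α (G.σ (G.φ (G.φ (G.α (G.φ d))))))) = 3 := by
        apply deg3_of_big hG hαP1v ?_ (by rw [hαP1f]; exact hb) (by rw [hQf]; norm_num)
        intro h
        rw [h] at hσb
        exact sigma_ne hG (G.φ (G.σ (G.φ (G.φ (G.α (G.φ d)))))) hσb
      have hp := deg3_pair hG hdq (by rw [hαP1f]; exact hb)
      rw [hσb] at hp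
      have hfQ : G.finv (G.φ (G.σ (G.φ (G.φ (G.α (G.φ d)))))) = 1/5 := finv_eq hQf
      have ht : G.faceSize (G.faceOf (G.σ (G.φ (G.σ (G.φ (G.φ (G.α (G.φ d)))))))) = 3 := by
        have hbig : 1/((4:ℕ):ℚ) < G.finv (G.σ (G.φ (G.σ (G.φ (G.φ (G.α (G.φ d))))))) := by
          push_cast
          rw [hfQ] at hp
          linarith
        have hlt := faceSize_lt_of_finv_gt (by norm_num) hbig
        have := three_le_faceSize hG (G.σ (G.φ (G.σ (G.φ (G.φ (G.α (G.φ d)))))))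
        omega
      have hαRv : G.vertexOf (G.α (G.φ (G.φ (G.σ (G.φ (G.φ (G.α (G.φ d)))))))) = G.vertexOf (G.φ (G.φ (G.α (G.φ (G.φ d))))) := by
        rw [← vertexOf_phi, hpent, hA0v]
      rcases deg3_mem hG hdw3 hαRv with h | h | h
      · have h2 : (G.φ (G.φ (G.σ (G.φ (G.φ (G.α (G.φ d))))))) = G.σ d' := by rw [← hαφ2Y3, ← h, alpha_alpha]
        have h3 : G.faceSize (G.faceOf (G.φ (G.φ (G.σ (G.φ (G.φ (G.α (G.φ d)))))))) = G.faceSize (G.faceOf (G.σ d')) := by rw [h2]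
        rw [faceOf_phi, faceOf_phi, hP1f, hx5, hfsd'] at h3
        omega
      · -- main sub-case : spiral closes with two big faces meeting
        have hσRf : G.faceOf (G.σ (G.φ (G.φ (G.σ (G.φ (G.φ (G.α (G.φ d)))))))) = G.faceOf (G.α d') := by
          rw [← faceOf_alpha (G.φ (G.φ (G.σ (G.φ (G.φ (G.α (G.φ d))))))), h, hz3f]
        have hRf : G.faceSize (G.faceOf (G.φ (G.φ (G.σ (G.φ (G.φ (G.α (G.φ d)))))))) = 5 := by
          rw [faceOf_phi, faceOf_phi, hP1f]; exact hx5
        have hdp : G.degree (G.vertexOf (G.σ (G.φ (G.φ (G.σ (G.φ (G.φ (G.α (G.φ d))))))))) = 3 :=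
          deg3_of_big hG (vertexOf_sigma _) (sigma_ne hG _)
            (by rw [hσRf]; exact hb') (by rw [hRf]; norm_num)
        have hdpR : G.degree (G.vertexOf (G.φ (G.φ (G.σ (G.φ (G.φ (G.α (G.φ d)))))))) = 3 := by rwa [vertexOf_sigma] at hdp
        have hαQinv : G.α (G.φ (G.σ (G.φ (G.φ (G.α (G.φ d)))))) = G.σ⁻¹ (G.φ (G.φ (G.σ (G.φ (G.φ (G.α (G.φ d))))))) := alpha_eq_inv_phi (G.φ (G.σ (G.φ (G.φ (G.α (G.φ d))))))
        have hαQsz : G.faceSize (G.faceOf (G.α (G.φ (G.σ (G.φ (G.φ (G.α (G.φ d)))))))) = 3 := by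
          rw [faceOf_alpha (G.φ (G.σ (G.φ (G.φ (G.α (G.φ d))))))]; exact ht
        have htriT := pow_faceSize_fix (G.α (G.φ (G.σ (G.φ (G.φ (G.α (G.φ d)))))))
        rw [hαQsz, pow3_apply] at htriT
        have hφαQ : G.φ (G.α (G.φ (G.σ (G.φ (G.φ (G.α (G.φ d))))))) = G.σ (G.φ (G.σ (G.φ (G.φ (G.α (G.φ d)))))) := phi_alpha (G.φ (G.σ (G.φ (G.φ (G.α (G.φ d))))))
        rw [hφαQ] at htriT
        have hσt : G.σ (G.σ (G.φ (G.σ (G.φ (G.φ (G.α (G.φ d))))))) = G.α (G.σ (G.φ (G.φ (G.α (G.φ d))))) := by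
          rw [← hσb]
          exact deg3_sigma3 hdq
        have hασQf : G.faceOf (G.α (G.σ (G.φ (G.σ (G.φ (G.φ (G.α (G.φ d)))))))) = G.faceOf (G.α d) := by
          rw [faceOf_alpha, hσt, hαP1f]
        have hασQv : G.vertexOf (G.α (G.σ (G.φ (G.σ (G.φ (G.φ (G.α (G.φ d)))))))) = G.vertexOf (G.φ (G.σ (G.φ (G.σ (G.φ (G.φ (G.α (G.φ d)))))))) :=
          (vertexOf_phi _).symm
        have hαT : G.α (G.φ (G.σ (G.φ (G.σ (G.φ (G.φ (G.α (G.φ d)))))))) = G.σ (G.φ (G.φ (G.σ (G.φ (G.φ (G.α (G.φ d))))))) := by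
          rw [alpha_eq_inv_phi, htriT, hαQinv, deg3_sigma_inv2 hdpR]
        have hσTf : G.faceOf (G.σ (G.φ (G.σ (G.φ (G.σ (G.φ (G.φ (G.α (G.φ d))))))))) = G.faceOf (G.α d') := by
          rw [← faceOf_alpha, hαT, hσRf]
        have hfin : G.α (G.σ (G.φ (G.σ (G.φ (G.φ (G.α (G.φ d))))))) ≠ G.σ (G.φ (G.σ (G.φ (G.σ (G.φ (G.φ (G.α (G.φ d)))))))) := by
          intro hx
          apply sigma_sigma_ne hG (G.φ (G.σ (G.φ (G.σ (G.φ (G.φ (G.α (G.φ d))))))))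
          have h2 := congrArg G.σ hx
          rw [alpha_eq_inv_phi (G.σ (G.φ (G.σ (G.φ (G.φ (G.α (G.φ d)))))))] at h2
          simp only [Equiv.Perm.coe_inv, Equiv.apply_symm_apply] at h2
          rw [← h2]
        exact two_big hG (hασQv.trans (vertexOf_sigma _).symm) hfin
          (by rw [hασQf]; exact hb) (by rw [hσTf]; exact hb')
      · rw [← hA0eq] at h
        have h2 := congrArg G.α h
        rw [alpha_alpha, alpha_alpha] at h2
        have h3 : G.faceSize (G.faceOf (G.φ (G.φ (G.σ (G.φ (G.φ (G.α (G.φ d)))))))) = G.faceSize (G.faceOf (G.σ (G.φ (G.φ d)))) := by rw [h2]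
        rw [faceOf_phi, faceOf_phi, hP1f, hx5, ← faceOf_alpha, hY3sz] at h3
        omega

/-- Case `e' = φ³ e`, `|κ| = 6`. -/
lemma core3 (hG : G.IsPCC) {d d' : G.D}
    (hj : G.φ (G.φ (G.φ d)) = d')
    (h6 : G.faceSize (G.faceOf d) = 6)
    (hb : 20 ≤ G.faceSize (G.faceOf (G.α d)))
    (hb' : 20 ≤ G.faceSize (G.faceOf (G.α d'))) : False := by
  have hfd' : G.faceOf d' = G.faceOf d := by
    rw [← hj, faceOf_phi, faceOf_phi, faceOf_phi]
  have h6' : G.faceSize (G.faceOf d') = 6 := by rw [hfd', h6]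
  have hj' : G.φ (G.φ (G.φ d')) = d := by
    have h := pow_faceSize_fix d
    rw [h6, pow6_apply] at h
    rw [← hj]
    exact h
  have hstep1 : G.φ (G.α d) = G.σ d := phi_alpha d
  have hstep2 : G.φ (G.α d') = G.σ d' := phi_alpha d'
  have hcyc : ∃ N, 0 < N ∧ N ≤ 8 ∧ (G.φ ^ N) (G.α d) = G.α d := by
    rcases core3_segment hG hj h6 hb hb' with hseg | hseg <;>
      rcases core3_segment hG hj' h6' hb' hb with hseg' | hseg'
    · exact ⟨6, by norm_num, by norm_num, by
        rw [pow6_apply, hstep1, hseg', hstep2, hseg]⟩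
    · exact ⟨7, by norm_num, by norm_num, by
        rw [pow7_apply, hstep1, hseg', hstep2, hseg]⟩
    · exact ⟨7, by norm_num, by norm_num, by
        rw [pow7_apply, hstep1, hseg', hstep2, hseg]⟩
    · exact ⟨8, by norm_num, by norm_num, by
        rw [pow8_apply, hstep1, hseg', hstep2, hseg]⟩
  obtain ⟨N, hN0, hN8, hfix⟩ := hcyc
  have := faceSize_le_of_pow_fix (G.α d) hN0 hfix
  omega

lemma core (hG : G.IsPCC) {d d' : G.D}
    (hκ : G.faceSize (G.faceOf d) ≤ 6)
    (hface : G.faceOf d = G.faceOf d') (hne : d ≠ d')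
    (hb : 20 ≤ G.faceSize (G.faceOf (G.α d)))
    (hb' : 20 ≤ G.faceSize (G.faceOf (G.α d'))) : False := by
  obtain ⟨j, hjlt, hj⟩ := sameCycle_exists_pow_lt G.φ (faceOf_eq_iff.1 hface)
  rw [← faceSize_faceOf d] at hjlt
  have hk3 : 3 ≤ G.faceSize (G.faceOf d) := three_le_faceSize hG d
  have hκ' : G.faceSize (G.faceOf d') ≤ 6 := by rwa [← hface]
  have h4' : ∀ m, 4 ≤ m → m ≤ G.faceSize (G.faceOf d) → 4 ≤ G.faceSize (G.faceOf d') := by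
    intro m hm hmk; rw [← hface]; omega
  have hj0 : j ≠ 0 := by
    rintro rfl
    exact hne (by simpa using hj)
  have hkfix : (G.φ ^ G.faceSize (G.faceOf d)) d = d := pow_faceSize_fix d
  rcases eq_or_ne j 1 with rfl | hj1
  · exact core_adjacent hG (by simpa using hj) hb hb'
  rcases eq_or_ne j (G.faceSize (G.faceOf d) - 1) with hje | hjne
  · have h2 : (G.φ ^ (j+1)) d = d := by
      have : j + 1 = G.faceSize (G.faceOf d) := by omega
      rw [this]; exact hkfix
    have hstep : G.φ d' = d := by
      rw [← hj, ← Equiv.Perm.mul_apply, ← pow_succ']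
      exact h2
    exact core_adjacent hG hstep hb' hb
  -- now 2 ≤ j ≤ k - 2
  have hjge2 : 2 ≤ j := by omega
  have hjle : j ≤ G.faceSize (G.faceOf d) - 2 := by omega
  rcases eq_or_ne j 2 with rfl | hj2
  · have hstep : G.φ (G.φ d) = d' := by
      rw [← hj, pow_two, Equiv.Perm.mul_apply]
    exact core2 hG hstep hκ (by omega) hb hb'
  rcases eq_or_ne j (G.faceSize (G.faceOf d) - 2) with hje2 | hjne2
  · have h2 : (G.φ ^ (j+2)) d = d := by
      have : j + 2 = G.faceSize (G.faceOf d) := by omega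
      rw [this]; exact hkfix
    have hstep : G.φ (G.φ d') = d := by
      have h3 : (G.φ ^ 2) d' = d := by
        rw [← hj, ← Equiv.Perm.mul_apply, ← pow_add]
        have h23 : 2 + j = j + 2 := by omega
        rw [h23]; exact h2
      rw [← h3, pow_two, Equiv.Perm.mul_apply]
    exact core2 hG hstep hκ' (by rw [← hface]; omega) hb' hb
  -- now 3 ≤ j ≤ k - 3, so k = 6 and j = 3
  have hk6 : G.faceSize (G.faceOf d) = 6 := by omega
  have hj3 : j = 3 := by omega
  subst hj3
  have hstep : G.φ (G.φ (G.φ d)) = d' := by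
    rw [← hj, pow3_apply]
  exact core3 hG hstep hk6 hb hb'

end Main

end PlaneGraph

/-- In a planar PCC graph, let `σ, σ', κ` be faces with
`|σ| ≥ 20`, `|σ'| ≥ 20` and `|κ| ≤ 6`, and let `e, e'` be boundary edges of
`κ` with `e` on the boundary of `σ` and `e'` on the boundary of `σ'`.
Then `σ = σ'` and `e = e'`. -/
theorem pcc_small_face_meets_at_most_one_large_face (G : PlaneGraph)
    (hG : G.IsPCC) (σ σ' κ : G.Face)
    (hσ : 20 ≤ G.faceSize σ) (hσ' : 20 ≤ G.faceSize σ')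
    (hκ : G.faceSize κ ≤ 6)
    (e e' : G.Edge)
    (heκ : e ∈ G.boundaryEdges κ) (he'κ : e' ∈ G.boundaryEdges κ)
    (heσ : e ∈ G.boundaryEdges σ) (he'σ' : e' ∈ G.boundaryEdges σ') :
    σ = σ' ∧ e = e' := by
  classical
  have hκσ : κ ≠ σ := by rintro rfl; omega
  have hκσ' : κ ≠ σ' := by rintro rfl; omega
  obtain ⟨dκ, hdκf, hdκe⟩ := PlaneGraph.mem_boundaryEdges.1 heκ
  obtain ⟨dσ, hdσf, hdσe⟩ := PlaneGraph.mem_boundaryEdges.1 heσ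
  obtain ⟨dκ', hdκ'f, hdκ'e⟩ := PlaneGraph.mem_boundaryEdges.1 he'κ
  obtain ⟨dσ', hdσ'f, hdσ'e⟩ := PlaneGraph.mem_boundaryEdges.1 he'σ'
  have hside : G.faceOf (G.α dκ) = σ := by
    have he0 : G.edgeOf dκ = G.edgeOf dσ := by rw [hdκe, hdσe]
    rcases PlaneGraph.edgeOf_eq_iff'.1 he0 with h | h
    · exfalso; apply hκσ; rw [← hdκf, ← hdσf, h]
    · rw [← h]; exact hdσf
  have hside' : G.faceOf (G.α dκ') = σ' := by
    have he0 : G.edgeOf dκ' = G.edgeOf dσ' := by rw [hdκ'e, hdσ'e]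
    rcases PlaneGraph.edgeOf_eq_iff'.1 he0 with h | h
    · exfalso; apply hκσ'; rw [← hdκ'f, ← hdσ'f, h]
    · rw [← h]; exact hdσ'f
  by_cases hee : e = e'
  · subst hee
    have he0 : G.edgeOf dκ = G.edgeOf dκ' := by rw [hdκe, hdκ'e]
    rcases PlaneGraph.edgeOf_eq_iff'.1 he0 with h | h
    · refine ⟨?_, rfl⟩
      rw [← hside, ← hside', h]
    · exfalso; apply hκσ; rw [← hdκ'f, h, hside]
  · exfalso
    have hdne : dκ ≠ dκ' := by
      intro h; apply hee; rw [← hdκe, ← hdκ'e, h]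
    apply PlaneGraph.core hG (d := dκ) (d' := dκ') ?_ ?_ hdne ?_ ?_
    · rw [hdκf]; exact hκ
    · rw [hdκf, hdκ'f]
    · rw [hside]; exact hσ
    · rw [hside']; exact hσ'
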